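/- arXiv:1504.07980 — 5 statements merged into one kernel-verified Lean document; each statement's English description precedes it below -/
import Mathlib

section
/- In any empty lattice triangle (a triangle with vertices in ℤ² containing no other integer points), the largest interior angle is at least π/2 and each of the other two angles is at most π/4. -/
open EuclideanGeometry Real

/-- The embedding of an integer point into the Euclidean plane. -/
noncomputable def latticePt (p : ℤ × ℤ) : EuclideanSpace ℝ (Fin 2) :=
  (WithLp.equiv 2 (Fin 2 → ℝ)).symm ![(p.1 : ℝ), (p.2 : ℝ)]

lemma latticePt_apply (p : ℤ × ℤ) (i : Fin 2) :
    latticePt p i = ![(p.1 : ℝ), (p.2 : ℝ)] i := by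
  rw [latticePt]; rfl

lemma latticePt_sub (p q : ℤ × ℤ) : latticePt p - latticePt q = latticePt (p - q) := by
  ext i
  rw [PiLp.sub_apply]
  fin_cases i <;> simp [latticePt_apply]

lemma inner_latticePt (p q : ℤ × ℤ) :
    inner ℝ (latticePt p) (latticePt q) = ((p.1 * q.1 + p.2 * q.2 : ℤ) : ℝ) := by
  rw [PiLp.inner_apply]
  simp [latticePt_apply, Fin.sum_univ_two]; ring

lemma norm_sq_latticePt (p : ℤ × ℤ) : ‖latticePt p‖ ^ 2 = ((p.1 ^ 2 + p.2 ^ 2 : ℤ) : ℝ) := by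
  rw [← real_inner_self_eq_norm_sq, inner_latticePt]; push_cast; ring

lemma angle_eq_arccos (x y z : ℤ × ℤ) (k : ℤ)
    (hk : (x - y).1 * (z - y).1 + (x - y).2 * (z - y).2 = k) :
    ∠ (latticePt x) (latticePt y) (latticePt z) =
      Real.arccos ((k : ℝ) / (‖latticePt (x - y)‖ * ‖latticePt (z - y)‖)) := by
  rw [EuclideanGeometry.angle, InnerProductGeometry.angle, vsub_eq_sub, vsub_eq_sub,
    latticePt_sub, latticePt_sub, inner_latticePt, hk]

lemma cos_angle_eq (x y z : ℤ × ℤ) (k : ℤ)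
    (hk : (x - y).1 * (z - y).1 + (x - y).2 * (z - y).2 = k) :
    Real.cos (∠ (latticePt x) (latticePt y) (latticePt z)) =
      (k : ℝ) / (‖latticePt (x - y)‖ * ‖latticePt (z - y)‖) := by
  rw [EuclideanGeometry.angle, vsub_eq_sub, vsub_eq_sub, InnerProductGeometry.cos_angle,
    latticePt_sub, latticePt_sub, inner_latticePt, hk]

lemma norm_latticePt_pos (p : ℤ × ℤ) (h : p.1 ^ 2 + p.2 ^ 2 ≠ 0) : 0 < ‖latticePt p‖ := by
  rcases (norm_nonneg (latticePt p)).lt_or_eq with h' | h'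
  · exact h'
  · exfalso
    apply h
    have := norm_sq_latticePt p
    rw [← h'] at this
    exact_mod_cast this.symm
lemma mem_hull_of_coords (a b c p : ℤ × ℤ) (σ τ : ℝ)
    (hσ : 0 ≤ σ) (hτ : 0 ≤ τ) (hστ : σ + τ ≤ 1)
    (h1 : (p.1 : ℝ) = a.1 + σ * (b.1 - a.1) + τ * (c.1 - a.1))
    (h2 : (p.2 : ℝ) = a.2 + σ * (b.2 - a.2) + τ * (c.2 - a.2)) :
    latticePt p ∈ convexHull ℝ ({latticePt a, latticePt b, latticePt c} :
      Set (EuclideanSpace ℝ (Fin 2))) := by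
  have key2 : latticePt p =
      latticePt a + σ • (latticePt b - latticePt a) + τ • (latticePt c - latticePt a) := by
    ext i
    rw [PiLp.add_apply, PiLp.add_apply, PiLp.smul_apply, PiLp.smul_apply, PiLp.sub_apply,
      PiLp.sub_apply]
    fin_cases i <;>
      simp only [latticePt_apply, Matrix.cons_val_zero, Matrix.cons_val_one, Matrix.head_cons,
        Fin.zero_eta, Fin.mk_one, smul_eq_mul]
    · rw [h1]
    · rw [h2]
  have key : latticePt p =
      (Finset.univ : Finset (Fin 3)).centerMass ![1 - σ - τ, σ, τ]
        ![latticePt a, latticePt b, latticePt c] := by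
    rw [Finset.centerMass]
    have hsum : ∑ i : Fin 3, (![1 - σ - τ, σ, τ]) i = 1 := by
      simp [Fin.sum_univ_three]; ring
    rw [hsum, inv_one, one_smul, Fin.sum_univ_three]
    simp only [Matrix.cons_val_zero, Matrix.cons_val_one, Matrix.head_cons, Matrix.cons_val_two,
      Matrix.tail_cons]
    rw [key2]
    module
  rw [key]
  apply Finset.centerMass_mem_convexHull
  · intro i _
    fin_cases i <;> simp [hσ, hτ] <;> linarith
  · have hsum : ∑ i : Fin 3, (![1 - σ - τ, σ, τ]) i = 1 := by
      simp [Fin.sum_univ_three]; ring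
    rw [hsum]; norm_num
  · intro i _
    fin_cases i <;> simp [Set.mem_insert_iff]

lemma det_eq_one_of_pos (a b c : ℤ × ℤ)
    (hD : 0 < (b.1 - a.1) * (c.2 - a.2) - (b.2 - a.2) * (c.1 - a.1))
    (hempty : ∀ p : ℤ × ℤ,
      latticePt p ∈ convexHull ℝ ({latticePt a, latticePt b, latticePt c} :
        Set (EuclideanSpace ℝ (Fin 2))) → p = a ∨ p = b ∨ p = c) :
    (b.1 - a.1) * (c.2 - a.2) - (b.2 - a.2) * (c.1 - a.1) = 1 := by
  set u1 := b.1 - a.1 with hu1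
  set u2 := b.2 - a.2 with hu2
  set v1 := c.1 - a.1 with hv1
  set v2 := c.2 - a.2 with hv2
  set D := u1 * v2 - u2 * v1 with hDdef
  by_contra hne1
  have hD2 : 2 ≤ D := by omega
  have hD0 : D ≠ 0 := by omega
  -- find a vector z = (z1, z2) whose coordinates w.r.t. u, v are not both integers
  obtain ⟨z1, z2, hz⟩ :
      ∃ z1 z2 : ℤ, ¬ (D ∣ z1 * v2 - z2 * v1) ∨ ¬ (D ∣ u1 * z2 - u2 * z1) := by
    by_contra h
    push_neg at h
    have h10 := h 1 0
    have h01 := h 0 1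
    simp only [one_mul, zero_mul, mul_one, mul_zero, sub_zero, zero_sub, dvd_neg] at h10 h01
    have hdv2 : D ∣ v2 := h10.1
    have hdu2 : D ∣ u2 := h10.2
    have hdv1 : D ∣ v1 := h01.1
    have hdu1 : D ∣ u1 := h01.2
    have : D * D ∣ D := by
      have h1 : D * D ∣ u1 * v2 := mul_dvd_mul hdu1 hdv2
      have h2 : D * D ∣ u2 * v1 := mul_dvd_mul hdu2 hdv1
      simpa [hDdef] using dvd_sub h1 h2
    have := Int.le_of_dvd (by omega) this
    nlinarith
  set s := z1 * v2 - z2 * v1 with hs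
  set t := u1 * z2 - u2 * z1 with ht
  set s' := s % D with hs'
  set t' := t % D with ht'
  have hs'0 : 0 ≤ s' := Int.emod_nonneg _ hD0
  have ht'0 : 0 ≤ t' := Int.emod_nonneg _ hD0
  have hs'D : s' < D := Int.emod_lt_of_pos _ (by omega)
  have ht'D : t' < D := Int.emod_lt_of_pos _ (by omega)
  have hzne : s' ≠ 0 ∨ t' ≠ 0 := by
    rcases hz with h | h
    · exact Or.inl fun h0 => h (Int.dvd_of_emod_eq_zero h0)
    · exact Or.inr fun h0 => h (Int.dvd_of_emod_eq_zero h0)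
  -- the reduced point
  set w1 := z1 - (s / D) * u1 - (t / D) * v1 with hw1
  set w2 := z2 - (s / D) * u2 - (t / D) * v2 with hw2
  have hsmod : s' = s - D * (s / D) := Int.emod_def s D
  have htmod : t' = t - D * (t / D) := Int.emod_def t D
  have hSw : w1 * v2 - w2 * v1 = s' := by rw [hsmod, hw1, hw2]; ring
  have hTw : u1 * w2 - u2 * w1 = t' := by rw [htmod, hw1, hw2]; ring
  -- Cramer identities
  have cram1 : D * w1 = s' * u1 + t' * v1 := by rw [← hSw, ← hTw]; ring
  have cram2 : D * w2 = s' * u2 + t' * v2 := by rw [← hSw, ← hTw]; ring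
  have hDR : (0:ℝ) < (D:ℝ) := by exact_mod_cast (by omega : (0:ℤ) < D)
  rcases le_or_gt (s' + t') D with hcase | hcase
  · -- use p = a + w
    have hmem := mem_hull_of_coords a b c (a.1 + w1, a.2 + w2) ((s':ℝ)/D) ((t':ℝ)/D)
      (div_nonneg (by exact_mod_cast hs'0) hDR.le)
      (div_nonneg (by exact_mod_cast ht'0) hDR.le)
      (by rw [← add_div, div_le_one hDR]; exact_mod_cast hcase)
      (by have h := cram1
          rw [hu1, hv1] at h
          have hR : (D:ℝ) * w1 = s' * ((b.1:ℝ) - a.1) + t' * ((c.1:ℝ) - a.1) := by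
            exact_mod_cast h
          field_simp
          push_cast
          linear_combination hR)
      (by have h := cram2
          rw [hu2, hv2] at h
          have hR : (D:ℝ) * w2 = s' * ((b.2:ℝ) - a.2) + t' * ((c.2:ℝ) - a.2) := by
            exact_mod_cast h
          field_simp
          push_cast
          linear_combination hR)
    rcases hempty _ hmem with h | h | h <;> rw [Prod.ext_iff] at h <;>
      simp only [Prod.fst, Prod.snd] at h
    · have e1 : w1 = 0 := by omega
      have e2 : w2 = 0 := by omega
      rw [e1, e2] at hSw hTw
      simp at hSw hTw
      omega
    · have e1 : w1 = u1 := by omega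
      have e2 : w2 = u2 := by omega
      rw [e1, e2] at hSw
      omega
    · have e1 : w1 = v1 := by omega
      have e2 : w2 = v2 := by omega
      rw [e1, e2] at hTw
      omega
  · -- use p = a + u + v - w
    set y1 := u1 + v1 - w1 with hy1
    set y2 := u2 + v2 - w2 with hy2
    have cram1' : D * y1 = (D - s') * u1 + (D - t') * v1 := by
      rw [hy1]; linear_combination -cram1
    have cram2' : D * y2 = (D - s') * u2 + (D - t') * v2 := by
      rw [hy2]; linear_combination -cram2
    have hmem := mem_hull_of_coords a b c (a.1 + y1, a.2 + y2) (((D:ℝ)-s')/D) (((D:ℝ)-t')/D)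
      (div_nonneg (by exact_mod_cast (by omega : (0:ℤ) ≤ D - s')) hDR.le)
      (div_nonneg (by exact_mod_cast (by omega : (0:ℤ) ≤ D - t')) hDR.le)
      (by rw [← add_div, div_le_one hDR]
          exact_mod_cast (by omega : (D:ℤ) - s' + (D - t') ≤ D))
      (by have h := cram1'
          rw [hu1, hv1] at h
          have hR : (D:ℝ) * y1 = ((D:ℝ) - s') * ((b.1:ℝ) - a.1) + ((D:ℝ) - t') * ((c.1:ℝ) - a.1) := by
            exact_mod_cast h
          field_simp
          push_cast
          linear_combination hR)
      (by have h := cram2'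
          rw [hu2, hv2] at h
          have hR : (D:ℝ) * y2 = ((D:ℝ) - s') * ((b.2:ℝ) - a.2) + ((D:ℝ) - t') * ((c.2:ℝ) - a.2) := by
            exact_mod_cast h
          field_simp
          push_cast
          linear_combination hR)
    have hSy : y1 * v2 - y2 * v1 = D - s' := by rw [hy1, hy2, ← hSw]; ring
    have hTy : u1 * y2 - u2 * y1 = D - t' := by rw [hy1, hy2, ← hTw]; ring
    rcases hempty _ hmem with h | h | h <;> rw [Prod.ext_iff] at h <;>
      simp only [Prod.fst, Prod.snd] at h
    · have e1 : y1 = 0 := by omega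
      have e2 : y2 = 0 := by omega
      rw [e1, e2] at hSy
      simp at hSy
      omega
    · have e1 : y1 = u1 := by omega
      have e2 : y2 = u2 := by omega
      rw [e1, e2] at hTy
      have : t' = D := by linear_combination hTy
      omega
    · have e1 : y1 = v1 := by omega
      have e2 : y2 = v2 := by omega
      rw [e1, e2] at hSy
      have : s' = D := by linear_combination hSy
      omega

set_option maxHeartbeats 1600000 in
/-- In any empty lattice triangle (a nondegenerate triangle with vertices in `ℤ²`
containing no other integer points), the largest interior angle is at least `π/2`
and each of the other two angles is at most `π/4`.  Here we label the vertices so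
that the angle at `a` is the largest one. -/
theorem empty_lattice_triangle_angles (a b c : ℤ × ℤ)
    (hnd : (b.1 - a.1) * (c.2 - a.2) - (b.2 - a.2) * (c.1 - a.1) ≠ 0)
    (hempty : ∀ p : ℤ × ℤ,
      latticePt p ∈ convexHull ℝ ({latticePt a, latticePt b, latticePt c} :
        Set (EuclideanSpace ℝ (Fin 2))) → p = a ∨ p = b ∨ p = c)
    (hmax1 : ∠ (latticePt a) (latticePt b) (latticePt c)
      ≤ ∠ (latticePt b) (latticePt a) (latticePt c))
    (hmax2 : ∠ (latticePt a) (latticePt c) (latticePt b)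
      ≤ ∠ (latticePt b) (latticePt a) (latticePt c)) :
    π / 2 ≤ ∠ (latticePt b) (latticePt a) (latticePt c) ∧
    ∠ (latticePt a) (latticePt b) (latticePt c) ≤ π / 4 ∧
    ∠ (latticePt a) (latticePt c) (latticePt b) ≤ π / 4 := by
  -- the determinant is ±1
  have hDsq : ((b.1 - a.1) * (c.2 - a.2) - (b.2 - a.2) * (c.1 - a.1)) ^ 2 = 1 := by
    rcases lt_or_gt_of_ne hnd with hneg | hpos
    · have hempty' : ∀ p : ℤ × ℤ,
          latticePt p ∈ convexHull ℝ ({latticePt a, latticePt c, latticePt b} :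
            Set (EuclideanSpace ℝ (Fin 2))) → p = a ∨ p = c ∨ p = b := by
        intro p hp
        rw [Set.pair_comm (latticePt c) (latticePt b)] at hp
        rcases hempty p hp with h | h | h <;> tauto
      have h := det_eq_one_of_pos a c b (by nlinarith) hempty'
      nlinarith
    · have h := det_eq_one_of_pos a b c hpos hempty
      rw [h]; norm_num
  set p : ℤ := (b.1 - a.1) ^ 2 + (b.2 - a.2) ^ 2 with hpdef
  set q : ℤ := (c.1 - a.1) ^ 2 + (c.2 - a.2) ^ 2 with hqdef
  set r : ℤ := (c.1 - b.1) ^ 2 + (c.2 - b.2) ^ 2 with hrdef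
  set d : ℤ := (b.1 - a.1) * (c.1 - a.1) + (b.2 - a.2) * (c.2 - a.2) with hddef
  have lagrange : p * q = d ^ 2 + 1 := by
    rw [hpdef, hqdef, hddef]; linear_combination hDsq
  have hreq : r = p + q - 2 * d := by rw [hpdef, hqdef, hrdef, hddef]; ring
  have hp1 : 1 ≤ p := by
    rcases (by positivity : (0:ℤ) ≤ p).lt_or_eq with h | h
    · omega
    · exfalso
      have h1 : b.1 - a.1 = 0 := by nlinarith [sq_nonneg (b.1 - a.1), sq_nonneg (b.2 - a.2)]
      have h2 : b.2 - a.2 = 0 := by nlinarith [sq_nonneg (b.1 - a.1), sq_nonneg (b.2 - a.2)]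
      exact hnd (by linear_combination (c.2 - a.2) * h1 - (c.1 - a.1) * h2)
  have hq1 : 1 ≤ q := by
    rcases (by positivity : (0:ℤ) ≤ q).lt_or_eq with h | h
    · omega
    · exfalso
      have h1 : c.1 - a.1 = 0 := by nlinarith [sq_nonneg (c.1 - a.1), sq_nonneg (c.2 - a.2)]
      have h2 : c.2 - a.2 = 0 := by nlinarith [sq_nonneg (c.1 - a.1), sq_nonneg (c.2 - a.2)]
      exact hnd (by linear_combination (b.1 - a.1) * h2 - (b.2 - a.2) * h1)
  have hr1 : 1 ≤ r := by
    rcases (by positivity : (0:ℤ) ≤ r).lt_or_eq with h | h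
    · omega
    · exfalso
      have h1 : c.1 - b.1 = 0 := by nlinarith [sq_nonneg (c.1 - b.1), sq_nonneg (c.2 - b.2)]
      have h2 : c.2 - b.2 = 0 := by nlinarith [sq_nonneg (c.1 - b.1), sq_nonneg (c.2 - b.2)]
      exact hnd (by linear_combination (b.1 - a.1) * h2 - (b.2 - a.2) * h1)
  -- norms
  have hn1 : 0 < ‖latticePt (b - a)‖ := by
    apply norm_latticePt_pos; simp only [Prod.fst_sub, Prod.snd_sub]; omega
  have hn2 : 0 < ‖latticePt (c - a)‖ := by
    apply norm_latticePt_pos; simp only [Prod.fst_sub, Prod.snd_sub]; omega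
  have hn3 : 0 < ‖latticePt (a - b)‖ := by
    apply norm_latticePt_pos; simp only [Prod.fst_sub, Prod.snd_sub]
    rw [show (a.1 - b.1) ^ 2 + (a.2 - b.2) ^ 2 = p by rw [hpdef]; ring]
    omega
  have hn4 : 0 < ‖latticePt (c - b)‖ := by
    apply norm_latticePt_pos; simp only [Prod.fst_sub, Prod.snd_sub]; omega
  have hn5 : 0 < ‖latticePt (a - c)‖ := by
    apply norm_latticePt_pos; simp only [Prod.fst_sub, Prod.snd_sub]
    rw [show (a.1 - c.1) ^ 2 + (a.2 - c.2) ^ 2 = q by rw [hqdef]; ring]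
    omega
  have hn6 : 0 < ‖latticePt (b - c)‖ := by
    apply norm_latticePt_pos; simp only [Prod.fst_sub, Prod.snd_sub]
    rw [show (b.1 - c.1) ^ 2 + (b.2 - c.2) ^ 2 = r by rw [hrdef]; ring]
    omega
  have hsq1 : ‖latticePt (b - a)‖ ^ 2 = (p : ℝ) := by
    have e : (b - a).1 ^ 2 + (b - a).2 ^ 2 = p := by
      simp only [Prod.fst_sub, Prod.snd_sub]; try rw [hpdef]; try ring
    rw [norm_sq_latticePt, e]
  have hsq2 : ‖latticePt (c - a)‖ ^ 2 = (q : ℝ) := by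
    have e : (c - a).1 ^ 2 + (c - a).2 ^ 2 = q := by
      simp only [Prod.fst_sub, Prod.snd_sub]; try rw [hqdef]; try ring
    rw [norm_sq_latticePt, e]
  have hsq3 : ‖latticePt (a - b)‖ ^ 2 = (p : ℝ) := by
    have e : (a - b).1 ^ 2 + (a - b).2 ^ 2 = p := by
      simp only [Prod.fst_sub, Prod.snd_sub]; try rw [hpdef]; try ring
    rw [norm_sq_latticePt, e]
  have hsq4 : ‖latticePt (c - b)‖ ^ 2 = (r : ℝ) := by
    have e : (c - b).1 ^ 2 + (c - b).2 ^ 2 = r := by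
      simp only [Prod.fst_sub, Prod.snd_sub]; try rw [hrdef]; try ring
    rw [norm_sq_latticePt, e]
  have hsq5 : ‖latticePt (a - c)‖ ^ 2 = (q : ℝ) := by
    have e : (a - c).1 ^ 2 + (a - c).2 ^ 2 = q := by
      simp only [Prod.fst_sub, Prod.snd_sub]; try rw [hqdef]; try ring
    rw [norm_sq_latticePt, e]
  have hsq6 : ‖latticePt (b - c)‖ ^ 2 = (r : ℝ) := by
    have e : (b - c).1 ^ 2 + (b - c).2 ^ 2 = r := by
      simp only [Prod.fst_sub, Prod.snd_sub]; try rw [hrdef]; try ring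
    rw [norm_sq_latticePt, e]
  -- inner products
  have hkA : (b - a).1 * (c - a).1 + (b - a).2 * (c - a).2 = d := by
    simp only [Prod.fst_sub, Prod.snd_sub]; try rw [hddef]; try ring
  have hkB : (a - b).1 * (c - b).1 + (a - b).2 * (c - b).2 = p - d := by
    simp only [Prod.fst_sub, Prod.snd_sub]; try rw [hpdef, hddef]; try ring
  have hkC : (a - c).1 * (b - c).1 + (a - c).2 * (b - c).2 = q - d := by
    simp only [Prod.fst_sub, Prod.snd_sub]; try rw [hqdef, hddef]; try ring
  -- `d ≤ 0`
  have hd0 : d ≤ 0 := by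
    by_contra hd
    push_neg at hd
    have hcosA := cos_angle_eq b a c d hkA
    have hcosB := cos_angle_eq a b c (p - d) hkB
    have hcosC := cos_angle_eq a c b (q - d) hkC
    have hAB := Real.cos_le_cos_of_nonneg_of_le_pi
      (EuclideanGeometry.angle_nonneg (latticePt a) (latticePt b) (latticePt c))
      (EuclideanGeometry.angle_le_pi (latticePt b) (latticePt a) (latticePt c)) hmax1
    have hAC := Real.cos_le_cos_of_nonneg_of_le_pi
      (EuclideanGeometry.angle_nonneg (latticePt a) (latticePt c) (latticePt b))
      (EuclideanGeometry.angle_le_pi (latticePt b) (latticePt a) (latticePt c)) hmax2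
    rw [hcosA, hcosB] at hAB
    rw [hcosA, hcosC] at hAC
    have hposA : 0 < (d : ℝ) / (‖latticePt (b - a)‖ * ‖latticePt (c - a)‖) :=
      div_pos (by exact_mod_cast hd) (mul_pos hn1 hn2)
    have hpdpos : 0 < ((p - d : ℤ) : ℝ) := by
      have h := lt_of_lt_of_le hposA hAB
      rcases div_pos_iff.mp h with ⟨h1, _⟩ | ⟨_, h2⟩
      · exact h1
      · exact absurd (mul_pos hn3 hn4) (by linarith)
    have hqdpos : 0 < ((q - d : ℤ) : ℝ) := by
      have h := lt_of_lt_of_le hposA hAC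
      rcases div_pos_iff.mp h with ⟨h1, _⟩ | ⟨_, h2⟩
      · exact h1
      · exact absurd (mul_pos hn5 hn6) (by linarith)
    have h1 : d + 1 ≤ p := by
      have : (0:ℤ) < p - d := by exact_mod_cast hpdpos
      omega
    have h2 : d + 1 ≤ q := by
      have : (0:ℤ) < q - d := by exact_mod_cast hqdpos
      omega
    have h3 : (d + 1) * (d + 1) ≤ p * q :=
      mul_le_mul h1 h2 (by omega) (by omega)
    nlinarith
  -- first conclusion
  have hAngA := angle_eq_arccos b a c d hkA
  have hAngB := angle_eq_arccos a b c (p - d) hkB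
  have hAngC := angle_eq_arccos a c b (q - d) hkC
  refine ⟨?_, ?_, ?_⟩
  · refine le_of_not_gt fun h => ?_
    rw [hAngA] at h
    have h' := Real.arccos_lt_pi_div_two.mp h
    rcases div_pos_iff.mp h' with ⟨h1, _⟩ | ⟨_, h2⟩
    · have : (0:ℤ) < d := by exact_mod_cast h1
      omega
    · exact absurd (mul_pos hn1 hn2) (by linarith)
  · rw [hAngB, Real.arccos_le_pi_div_four]
    have hNpos : 0 < ‖latticePt (a - b)‖ * ‖latticePt (c - b)‖ := mul_pos hn3 hn4
    have hN2 : (‖latticePt (a - b)‖ * ‖latticePt (c - b)‖) ^ 2 = (p : ℝ) * r := by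
      rw [mul_pow, hsq3, hsq4]
    have hPint : 1 ≤ p - d := by omega
    have hP1 : (1 : ℝ) ≤ ((p - d : ℤ) : ℝ) := by exact_mod_cast hPint
    have hprd : (p : ℝ) * r ≤ 2 * ((p - d : ℤ) : ℝ) ^ 2 := by
      have hint : p * r ≤ 2 * (p - d) ^ 2 := by
        have key : p * r = (p - d) ^ 2 + 1 := by linear_combination lagrange + p * hreq
        nlinarith
      exact_mod_cast hint
    rw [div_le_div_iff₀ (by norm_num) hNpos]
    have h5 : 0 < Real.sqrt 2 * (‖latticePt (a - b)‖ * ‖latticePt (c - b)‖)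
        + 2 * ((p - d : ℤ) : ℝ) := by positivity
    nlinarith [Real.sq_sqrt (by norm_num : (0:ℝ) ≤ 2), Real.sqrt_nonneg 2,
      sq_nonneg (Real.sqrt 2 * (‖latticePt (a - b)‖ * ‖latticePt (c - b)‖)
        - 2 * ((p - d : ℤ) : ℝ))]
  · rw [hAngC, Real.arccos_le_pi_div_four]
    have hNpos : 0 < ‖latticePt (a - c)‖ * ‖latticePt (b - c)‖ := mul_pos hn5 hn6
    have hN2 : (‖latticePt (a - c)‖ * ‖latticePt (b - c)‖) ^ 2 = (q : ℝ) * r := by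
      rw [mul_pow, hsq5, hsq6]
    have hPint : 1 ≤ q - d := by omega
    have hP1 : (1 : ℝ) ≤ ((q - d : ℤ) : ℝ) := by exact_mod_cast hPint
    have hprd : (q : ℝ) * r ≤ 2 * ((q - d : ℤ) : ℝ) ^ 2 := by
      have hint : q * r ≤ 2 * (q - d) ^ 2 := by
        have key : q * r = (q - d) ^ 2 + 1 := by linear_combination lagrange + q * hreq
        nlinarith
      exact_mod_cast hint
    rw [div_le_div_iff₀ (by norm_num) hNpos]
    have h5 : 0 < Real.sqrt 2 * (‖latticePt (a - c)‖ * ‖latticePt (b - c)‖)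
        + 2 * ((q - d : ℤ) : ℝ) := by positivity
    nlinarith [Real.sq_sqrt (by norm_num : (0:ℝ) ≤ 2), Real.sqrt_nonneg 2,
      sq_nonneg (Real.sqrt 2 * (‖latticePt (a - c)‖ * ‖latticePt (b - c)‖)
        - 2 * ((q - d : ℤ) : ℝ))]
end

section
/- Let Δ and Δ' be two empty lattice triangles sharing a common edge e such that Δ ∪ Δ' is a strictly convex quadrilateral (necessarily a parallelogram). If e is the shorter diagonal of this parallelogram, then after replacing e by the other diagonal f, the two new triangles each have largest angle at least as large as the largest angles of Δ and Δ', and the non-largest angles of the new triangles are obtained by splitting non-largest angles of Δ and Δ'. -/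
open EuclideanGeometry

/-- The largest interior angle of the triangle with vertices `x, y, z`. -/
noncomputable def maxAngle (x y z : EuclideanSpace ℝ (Fin 2)) : ℝ :=
  max (∠ y x z) (max (∠ x y z) (∠ x z y))

section FlipAux

variable {V : Type*} [NormedAddCommGroup V] [InnerProductSpace ℝ V]
  [Fact (Module.finrank ℝ V = 2)]

private lemma sign_toReal_bounds {θ : Real.Angle} (h : θ.sign = 1) :
    0 < θ.toReal ∧ θ.toReal < Real.pi := by
  have h0 : θ ≠ 0 ∧ θ ≠ Real.pi := Real.Angle.sign_ne_zero_iff.mp (by rw [h]; decide)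
  have h1 : 0 ≤ θ.toReal := Real.Angle.toReal_nonneg_iff_sign_nonneg.mpr (by rw [h]; decide)
  refine ⟨h1.lt_of_ne fun hh => h0.1 (Real.Angle.toReal_eq_zero_iff.mp hh.symm), ?_⟩
  exact (θ.toReal_le_pi).lt_of_ne fun hh => h0.2 (Real.Angle.toReal_eq_pi_iff.mp hh)

private lemma split_pos (o : Orientation ℝ V (Fin 2)) {x y : V} (hx : x ≠ 0) (hy : y ≠ 0)
    (hxy : x + y ≠ 0) (hs : (o.oangle x y).sign = 1) :
    InnerProductGeometry.angle x y
      = InnerProductGeometry.angle x (x + y) + InnerProductGeometry.angle (x + y) y := by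
  have hadd : o.oangle x (x + y) + o.oangle (x + y) y = o.oangle x y := o.oangle_add hx hxy hy
  have s1 : (o.oangle x (x + y)).sign = 1 := by rw [o.oangle_sign_add_right]; exact hs
  have s2 : (o.oangle (x + y) y).sign = 1 := by rw [o.oangle_sign_add_left]; exact hs
  obtain ⟨ht1, ht1'⟩ := sign_toReal_bounds s1
  obtain ⟨ht2, ht2'⟩ := sign_toReal_bounds s2
  obtain ⟨ht, ht'⟩ := sign_toReal_bounds hs
  have hco : ((((o.oangle x (x + y)).toReal + (o.oangle (x + y) y).toReal : ℝ)) : Real.Angle)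
      = (((o.oangle x y).toReal : ℝ) : Real.Angle) := by
    rw [Real.Angle.coe_add, Real.Angle.coe_toReal, Real.Angle.coe_toReal,
      Real.Angle.coe_toReal, hadd]
  rw [Real.Angle.angle_eq_iff_two_pi_dvd_sub] at hco
  obtain ⟨k, hk⟩ := hco
  have hpi := Real.pi_pos
  have hk0 : k = 0 := by
    have hl : (-1 : ℝ) < (k : ℝ) := by nlinarith
    have hr : ((k : ℝ)) < 1 := by nlinarith
    have hl' : (-1 : ℤ) < k := by exact_mod_cast hl
    have hr' : k < (1 : ℤ) := by exact_mod_cast hr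
    omega
  rw [hk0] at hk
  rw [o.angle_eq_abs_oangle_toReal hx hy, o.angle_eq_abs_oangle_toReal hx hxy,
    o.angle_eq_abs_oangle_toReal hxy hy, abs_of_pos ht, abs_of_pos ht1, abs_of_pos ht2]
  push_cast at hk
  linarith

private lemma angle_split (o : Orientation ℝ V (Fin 2)) {x y : V}
    (h : LinearIndependent ℝ ![x, y]) :
    InnerProductGeometry.angle x y
      = InnerProductGeometry.angle x (x + y) + InnerProductGeometry.angle (x + y) y := by
  have hpair := LinearIndependent.pair_iff.mp h
  have hx : x ≠ 0 := by have := h.ne_zero 0; simpa using this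
  have hy : y ≠ 0 := by have := h.ne_zero 1; simpa using this
  have hxy : x + y ≠ 0 := by
    intro hh
    have := (hpair 1 1 (by rw [one_smul, one_smul]; exact hh)).1
    norm_num at this
  have hsne : (o.oangle x y).sign ≠ 0 := by
    rw [Real.Angle.sign_ne_zero_iff]
    constructor
    · intro hh
      obtain ⟨r, hr, hry⟩ := (o.oangle_eq_zero_iff_sameRay.mp hh).exists_pos_left hx hy
      have := (hpair r (-1) (by rw [neg_one_smul, hry]; abel)).2
      norm_num at this
    · intro hh
      obtain ⟨r, hr, hry⟩ :=
        (o.oangle_eq_pi_iff_sameRay_neg.mp hh).2.2.exists_pos_left hx (neg_ne_zero.mpr hy)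
      have := (hpair r 1 (by rw [one_smul, hry]; abel)).2
      norm_num at this
  cases hsv : (o.oangle x y).sign with
  | zero => exact absurd hsv hsne
  | pos => exact split_pos o hx hy hxy hsv
  | neg =>
    have hs' : (o.oangle y x).sign = 1 := by
      rw [o.oangle_rev, Real.Angle.sign_neg, hsv]; decide
    have h2 := split_pos o hy hx (by rwa [add_comm]) hs'
    rw [add_comm y x] at h2
    rw [InnerProductGeometry.angle_comm y x] at h2
    rw [h2, InnerProductGeometry.angle_comm y (x + y),
      InnerProductGeometry.angle_comm (x + y) x, add_comm]

omit [Fact (Module.finrank ℝ V = 2)] in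
private lemma pair_shuffle {u v : V} (h : LinearIndependent ℝ ![u, v]) (a b c d : ℝ)
    (hdet : a * d - b * c ≠ 0) : LinearIndependent ℝ ![a • u + b • v, c • u + d • v] := by
  rw [LinearIndependent.pair_iff] at h ⊢
  intro s t hst
  have e : (s * a + t * c) • u + (s * b + t * d) • v
      = s • (a • u + b • v) + t • (c • u + d • v) := by module
  obtain ⟨e1, e2⟩ := h _ _ (by rw [e, hst])
  constructor
  · have hs0 : s * (a * d - b * c) = d * (s * a + t * c) - c * (s * b + t * d) := by ring
    rw [e1, e2] at hs0
    simp only [mul_zero, sub_zero] at hs0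
    rcases mul_eq_zero.mp hs0 with h' | h'
    · exact h'
    · exact absurd h' hdet
  · have ht0 : t * (a * d - b * c) = a * (s * b + t * d) - b * (s * a + t * c) := by ring
    rw [e1, e2] at ht0
    simp only [mul_zero, sub_zero] at ht0
    rcases mul_eq_zero.mp ht0 with h' | h'
    · exact h'
    · exact absurd h' hdet

end FlipAux

set_option maxHeartbeats 2000000 in
/-- Flipping the shorter diagonal of a parallelogram formed by two empty lattice
triangles: let `Δ = (p,q,r)` and `Δ' = (p,s,r)` be empty lattice triangles sharing
the edge `e = pr`, whose union is the parallelogram `p q r s` (so `p + r = q + s`),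
and suppose `e = pr` is the shorter diagonal.  Then after replacing `e` by the other
diagonal `f = qs`, the two new triangles `(p,q,s)` and `(r,q,s)` each have largest
angle at least as large as the largest angles of `Δ` and `Δ'`, and the angles of the
old and new triangles at the four corners of the parallelogram are obtained by
splitting the corner angles by the respective diagonals. -/
theorem flip_increases_max_angle (p q r s : ℤ × ℤ)
    (hpar : p + r = q + s)
    (hnd1 : (q.1 - p.1) * (r.2 - p.2) - (q.2 - p.2) * (r.1 - p.1) ≠ 0)
    (hempty1 : ∀ x : ℤ × ℤ,
      latticePt x ∈ convexHull ℝ ({latticePt p, latticePt q, latticePt r} :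
        Set (EuclideanSpace ℝ (Fin 2))) → x = p ∨ x = q ∨ x = r)
    (hempty2 : ∀ x : ℤ × ℤ,
      latticePt x ∈ convexHull ℝ ({latticePt p, latticePt s, latticePt r} :
        Set (EuclideanSpace ℝ (Fin 2))) → x = p ∨ x = s ∨ x = r)
    (hshort : dist (latticePt p) (latticePt r) ≤ dist (latticePt q) (latticePt s)) :
    -- the corner angles of the parallelogram are split by the diagonals:
    (∠ (latticePt q) (latticePt p) (latticePt s)
        = ∠ (latticePt q) (latticePt p) (latticePt r)
          + ∠ (latticePt r) (latticePt p) (latticePt s) ∧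
     ∠ (latticePt q) (latticePt r) (latticePt s)
        = ∠ (latticePt q) (latticePt r) (latticePt p)
          + ∠ (latticePt p) (latticePt r) (latticePt s) ∧
     ∠ (latticePt p) (latticePt q) (latticePt r)
        = ∠ (latticePt p) (latticePt q) (latticePt s)
          + ∠ (latticePt s) (latticePt q) (latticePt r) ∧
     ∠ (latticePt p) (latticePt s) (latticePt r)
        = ∠ (latticePt p) (latticePt s) (latticePt q)
          + ∠ (latticePt q) (latticePt s) (latticePt r)) ∧
    -- each new triangle has largest angle at least the largest angles of Δ and Δ':
    (maxAngle (latticePt p) (latticePt q) (latticePt s)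
        ≥ maxAngle (latticePt p) (latticePt q) (latticePt r) ∧
     maxAngle (latticePt p) (latticePt q) (latticePt s)
        ≥ maxAngle (latticePt p) (latticePt s) (latticePt r) ∧
     maxAngle (latticePt r) (latticePt q) (latticePt s)
        ≥ maxAngle (latticePt p) (latticePt q) (latticePt r) ∧
     maxAngle (latticePt r) (latticePt q) (latticePt s)
        ≥ maxAngle (latticePt p) (latticePt s) (latticePt r)) := by
  haveI : Fact (Module.finrank ℝ (EuclideanSpace ℝ (Fin 2)) = 2) :=
    ⟨finrank_euclideanSpace_fin⟩
  set o : Orientation ℝ (EuclideanSpace ℝ (Fin 2)) (Fin 2) :=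
    ((EuclideanSpace.basisFun (Fin 2) ℝ).toBasis).orientation with ho
  -- coordinates of r
  have h1 : r.1 = q.1 + s.1 - p.1 := by
    have := congrArg Prod.fst hpar; simp at this; omega
  have h2 : r.2 = q.2 + s.2 - p.2 := by
    have := congrArg Prod.snd hpar; simp at this; omega
  have hr : latticePt r = latticePt q + latticePt s - latticePt p := by
    ext i
    fin_cases i <;> simp [latticePt, h1, h2, PiLp.add_apply, PiLp.sub_apply] <;> push_cast <;> ring
  obtain ⟨u, hu⟩ : ∃ u, u = latticePt q - latticePt p := ⟨_, rfl⟩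
  obtain ⟨v, hv⟩ : ∃ v, v = latticePt s - latticePt p := ⟨_, rfl⟩
  -- linear independence of u, v
  have hu0 : u 0 = (q.1 : ℝ) - p.1 := by rw [hu]; simp [latticePt, PiLp.sub_apply]
  have hu1 : u 1 = (q.2 : ℝ) - p.2 := by rw [hu]; simp [latticePt, PiLp.sub_apply]
  have hv0 : v 0 = (s.1 : ℝ) - p.1 := by rw [hv]; simp [latticePt, PiLp.sub_apply]
  have hv1 : v 1 = (s.2 : ℝ) - p.2 := by rw [hv]; simp [latticePt, PiLp.sub_apply]
  have hcross : ((q.1 : ℝ) - p.1) * ((s.2 : ℝ) - p.2)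
      - ((q.2 : ℝ) - p.2) * ((s.1 : ℝ) - p.1) ≠ 0 := by
    intro hh
    apply hnd1
    have hz : ((q.1 : ℝ) - p.1) * ((r.2 : ℝ) - p.2) - ((q.2 : ℝ) - p.2) * ((r.1 : ℝ) - p.1)
        = 0 := by
      have e1 : ((r.1 : ℝ)) = (q.1 : ℝ) + (s.1 : ℝ) - (p.1 : ℝ) := by exact_mod_cast h1
      have e2 : ((r.2 : ℝ)) = (q.2 : ℝ) + (s.2 : ℝ) - (p.2 : ℝ) := by exact_mod_cast h2
      rw [e1, e2]; linarith [hh]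
    exact_mod_cast hz
  have hli : LinearIndependent ℝ ![u, v] := by
    rw [LinearIndependent.pair_iff]
    intro a b hab
    have c0 : a * u 0 + b * v 0 = 0 := by
      have := congrArg (fun w => w 0) hab
      simpa [PiLp.add_apply, PiLp.smul_apply] using this
    have c1 : a * u 1 + b * v 1 = 0 := by
      have := congrArg (fun w => w 1) hab
      simpa [PiLp.add_apply, PiLp.smul_apply] using this
    rw [hu0, hv0] at c0
    rw [hu1, hv1] at c1
    constructor
    · have ha : a * (((q.1 : ℝ) - p.1) * ((s.2 : ℝ) - p.2)
          - ((q.2 : ℝ) - p.2) * ((s.1 : ℝ) - p.1)) = 0 := by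
        linear_combination ((s.2 : ℝ) - p.2) * c0 - ((s.1 : ℝ) - p.1) * c1
      rcases mul_eq_zero.mp ha with h' | h'
      · exact h'
      · exact absurd h' hcross
    · have hb : b * (((q.1 : ℝ) - p.1) * ((s.2 : ℝ) - p.2)
          - ((q.2 : ℝ) - p.2) * ((s.1 : ℝ) - p.1)) = 0 := by
        linear_combination ((q.1 : ℝ) - p.1) * c1 - ((q.2 : ℝ) - p.2) * c0
      rcases mul_eq_zero.mp hb with h' | h'
      · exact h'
      · exact absurd h' hcross
  have hu0' : u ≠ 0 := by have := hli.ne_zero 0; simpa using this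
  have hv0' : v ≠ 0 := by have := hli.ne_zero 1; simpa using this
  -- shuffled independent pairs
  have hli2 : LinearIndependent ℝ ![-v, -u] := by
    have := pair_shuffle hli 0 (-1) (-1) 0 (by norm_num)
    simpa using this
  have hli3 : LinearIndependent ℝ ![-u, v] := by
    have := pair_shuffle hli (-1) 0 0 1 (by norm_num)
    simpa using this
  have hli4 : LinearIndependent ℝ ![-v, u] := by
    have := pair_shuffle hli 0 (-1) 1 0 (by norm_num)
    simpa using this
  -- angle expressions in vector form
  have angle_eq : ∀ a b c : EuclideanSpace ℝ (Fin 2),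
      ∠ a b c = InnerProductGeometry.angle (a - b) (c - b) := fun _ _ _ => rfl
  have eQPS : ∠ (latticePt q) (latticePt p) (latticePt s) = InnerProductGeometry.angle u v := by
    rw [angle_eq, hu, hv]
  have eQPR : ∠ (latticePt q) (latticePt p) (latticePt r)
      = InnerProductGeometry.angle u (u + v) := by
    rw [angle_eq]; congr 1
    · rw [hu]
    · rw [hu, hv, hr]; abel
  have eRPS : ∠ (latticePt r) (latticePt p) (latticePt s)
      = InnerProductGeometry.angle (u + v) v := by
    rw [angle_eq]; congr 1
    · rw [hu, hv, hr]; abel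
    · rw [hv]
  have eQRS : ∠ (latticePt q) (latticePt r) (latticePt s)
      = InnerProductGeometry.angle (-v) (-u) := by
    rw [angle_eq]; congr 1
    · rw [hv, hr]; abel
    · rw [hu, hr]; abel
  have eQRP : ∠ (latticePt q) (latticePt r) (latticePt p)
      = InnerProductGeometry.angle (-v) (-v + -u) := by
    rw [angle_eq]; congr 1
    · rw [hv, hr]; abel
    · rw [hu, hv, hr]; abel
  have ePRS : ∠ (latticePt p) (latticePt r) (latticePt s)
      = InnerProductGeometry.angle (-v + -u) (-u) := by
    rw [angle_eq]; congr 1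
    · rw [hu, hv, hr]; abel
    · rw [hu, hr]; abel
  have ePQR : ∠ (latticePt p) (latticePt q) (latticePt r)
      = InnerProductGeometry.angle (-u) v := by
    rw [angle_eq]; congr 1
    · rw [hu]; abel
    · rw [hv, hr]; abel
  have ePQS : ∠ (latticePt p) (latticePt q) (latticePt s)
      = InnerProductGeometry.angle (-u) (-u + v) := by
    rw [angle_eq]; congr 1
    · rw [hu]; abel
    · rw [hu, hv]; abel
  have eSQR : ∠ (latticePt s) (latticePt q) (latticePt r)
      = InnerProductGeometry.angle (-u + v) v := by
    rw [angle_eq]; congr 1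
    · rw [hu, hv]; abel
    · rw [hv, hr]; abel
  have ePSR : ∠ (latticePt p) (latticePt s) (latticePt r)
      = InnerProductGeometry.angle (-v) u := by
    rw [angle_eq]; congr 1
    · rw [hv]; abel
    · rw [hu, hr]; abel
  have ePSQ : ∠ (latticePt p) (latticePt s) (latticePt q)
      = InnerProductGeometry.angle (-v) (-v + u) := by
    rw [angle_eq]; congr 1
    · rw [hv]; abel
    · rw [hu, hv]; abel
  have eQSR : ∠ (latticePt q) (latticePt s) (latticePt r)
      = InnerProductGeometry.angle (-v + u) u := by
    rw [angle_eq]; congr 1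
    · rw [hu, hv]; abel
    · rw [hu, hr]; abel
  -- the four splitting identities
  have c1 : ∠ (latticePt q) (latticePt p) (latticePt s)
      = ∠ (latticePt q) (latticePt p) (latticePt r)
        + ∠ (latticePt r) (latticePt p) (latticePt s) := by
    rw [eQPS, eQPR, eRPS]; exact angle_split o hli
  have c2 : ∠ (latticePt q) (latticePt r) (latticePt s)
      = ∠ (latticePt q) (latticePt r) (latticePt p)
        + ∠ (latticePt p) (latticePt r) (latticePt s) := by
    rw [eQRS, eQRP, ePRS]; exact angle_split o hli2
  have c3 : ∠ (latticePt p) (latticePt q) (latticePt r)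
      = ∠ (latticePt p) (latticePt q) (latticePt s)
        + ∠ (latticePt s) (latticePt q) (latticePt r) := by
    rw [ePQR, ePQS, eSQR]; exact angle_split o hli3
  have c4 : ∠ (latticePt p) (latticePt s) (latticePt r)
      = ∠ (latticePt p) (latticePt s) (latticePt q)
        + ∠ (latticePt q) (latticePt s) (latticePt r) := by
    rw [ePSR, ePSQ, eQSR]; exact angle_split o hli4
  -- opposite corner angles are equal
  have hopp1 : ∠ (latticePt q) (latticePt r) (latticePt s)
      = ∠ (latticePt q) (latticePt p) (latticePt s) := by
    rw [eQRS, eQPS, InnerProductGeometry.angle_neg_neg, InnerProductGeometry.angle_comm]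
  have hopp2 : ∠ (latticePt p) (latticePt s) (latticePt r)
      = ∠ (latticePt p) (latticePt q) (latticePt r) := by
    rw [ePSR, ePQR, ← InnerProductGeometry.angle_neg_neg, neg_neg,
      InnerProductGeometry.angle_comm]
  -- β ≤ α from the law of cosines and hshort
  have hQP : latticePt q ≠ latticePt p := by
    intro hh; apply hu0'; rw [hu, hh, sub_self]
  have hSP : latticePt s ≠ latticePt p := by
    intro hh; apply hv0'; rw [hv, hh, sub_self]
  have hRQSP : dist (latticePt r) (latticePt q) = dist (latticePt s) (latticePt p) := by
    rw [dist_eq_norm, dist_eq_norm]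
    congr 1
    rw [hr]; abel
  have hβα : ∠ (latticePt p) (latticePt q) (latticePt r)
      ≤ ∠ (latticePt q) (latticePt p) (latticePt s) := by
    have lc1 := EuclideanGeometry.law_cos (latticePt p) (latticePt q) (latticePt r)
    have lc2 := EuclideanGeometry.law_cos (latticePt q) (latticePt p) (latticePt s)
    have hd2 : dist (latticePt p) (latticePt r) ^ 2 ≤ dist (latticePt q) (latticePt s) ^ 2 :=
      pow_le_pow_left₀ dist_nonneg hshort 2
    have hcomm : dist (latticePt p) (latticePt q) = dist (latticePt q) (latticePt p) :=
      dist_comm _ _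
    have hpq : 0 < dist (latticePt q) (latticePt p) := dist_pos.mpr hQP
    have hsp : 0 < dist (latticePt s) (latticePt p) := dist_pos.mpr hSP
    have hcos : Real.cos (∠ (latticePt q) (latticePt p) (latticePt s))
        ≤ Real.cos (∠ (latticePt p) (latticePt q) (latticePt r)) := by
      rw [hcomm, hRQSP] at lc1
      nlinarith [mul_pos hpq hsp]
    by_contra hlt
    push_neg at hlt
    have := Real.strictAntiOn_cos
      ⟨EuclideanGeometry.angle_nonneg _ _ _, EuclideanGeometry.angle_le_pi _ _ _⟩
      ⟨EuclideanGeometry.angle_nonneg _ _ _, EuclideanGeometry.angle_le_pi _ _ _⟩ hlt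
    linarith
  -- assembling the max-angle inequalities
  have hmaxPQR : maxAngle (latticePt p) (latticePt q) (latticePt r)
      ≤ ∠ (latticePt q) (latticePt p) (latticePt s) := by
    have e1 : ∠ (latticePt q) (latticePt p) (latticePt r)
        ≤ ∠ (latticePt q) (latticePt p) (latticePt s) := by
      have := EuclideanGeometry.angle_nonneg (latticePt r) (latticePt p) (latticePt s)
      linarith [c1]
    have e2 : ∠ (latticePt p) (latticePt r) (latticePt q)
        ≤ ∠ (latticePt q) (latticePt p) (latticePt s) := by
      rw [EuclideanGeometry.angle_comm]
      have := EuclideanGeometry.angle_nonneg (latticePt p) (latticePt r) (latticePt s)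
      linarith [c2, hopp1]
    exact max_le e1 (max_le hβα e2)
  have hmaxPSR : maxAngle (latticePt p) (latticePt s) (latticePt r)
      ≤ ∠ (latticePt q) (latticePt p) (latticePt s) := by
    have e1 : ∠ (latticePt s) (latticePt p) (latticePt r)
        ≤ ∠ (latticePt q) (latticePt p) (latticePt s) := by
      rw [EuclideanGeometry.angle_comm]
      have := EuclideanGeometry.angle_nonneg (latticePt q) (latticePt p) (latticePt r)
      linarith [c1]
    have e2 : ∠ (latticePt p) (latticePt s) (latticePt r)
        ≤ ∠ (latticePt q) (latticePt p) (latticePt s) := by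
      rw [hopp2]; exact hβα
    have e3 : ∠ (latticePt p) (latticePt r) (latticePt s)
        ≤ ∠ (latticePt q) (latticePt p) (latticePt s) := by
      have := EuclideanGeometry.angle_nonneg (latticePt q) (latticePt r) (latticePt p)
      linarith [c2, hopp1]
    exact max_le e1 (max_le e2 e3)
  have hge1 : ∠ (latticePt q) (latticePt p) (latticePt s)
      ≤ maxAngle (latticePt p) (latticePt q) (latticePt s) := le_max_left _ _
  have hge2 : ∠ (latticePt q) (latticePt p) (latticePt s)
      ≤ maxAngle (latticePt r) (latticePt q) (latticePt s) := by
    rw [← hopp1]; exact le_max_left _ _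
  exact ⟨⟨c1, c2, c3, c4⟩, le_trans hmaxPQR hge1, le_trans hmaxPSR hge1,
    le_trans hmaxPQR hge2, le_trans hmaxPSR hge2⟩
end

section
/- Let T = (a, b, c) be an empty lattice triangle in which the edge ab is the longest edge (in ℓ₁ norm), and suppose the other two edges bc, ca have ℓ₁ lengths ℓ₂ and ℓ₃ with ℓ₂, ℓ₃ < ℓ₁ where ℓ₁ = |ab|₁. Then ℓ₁ = ℓ₂ + ℓ₃; that is, the ℓ₁ length of the longest edge of an empty lattice triangle whose other two edges are strictly shorter equals the sum of the ℓ₁ lengths of the other two edges. -/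
lemma lemA (x1 x2 y1 y2 : ℤ) (hx1 : 1 ≤ x1) (hy1 : 1 ≤ y1) (hx2 : 0 ≤ x2) (hy2 : 0 ≤ y2)
    (hdet : x2*y1 - x1*y2 = 1 ∨ x2*y1 - x1*y2 = -1)
    (hA : x1 + |x2| < |x1-y1| + |x2-y2|)
    (hB : y1 + |y2| < |x1-y1| + |x2-y2|) : False := by
  rw [abs_of_nonneg hx2] at hA
  rw [abs_of_nonneg hy2] at hB
  rcases abs_cases (x1-y1) with ⟨e3,s3⟩|⟨e3,s3⟩ <;>
  rcases abs_cases (x2-y2) with ⟨e4,s4⟩|⟨e4,s4⟩ <;>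
    simp only [e3, e4] at hA hB
  · linarith
  · have h1 : 2*y1 + x2 < x1 := by linarith
    have h2 : 2*x2 + y1 < y2 := by linarith
    have hm : (2*y1 + x2) * (2*x2 + y1) < x1 * y2 :=
      mul_lt_mul'' h1 h2 (by linarith) (by linarith)
    rcases hdet with hdet|hdet <;> nlinarith [sq_nonneg y1, sq_nonneg x2]
  · have h1 : 2*x1 + y2 < y1 := by linarith
    have h2 : 2*y2 + x1 < x2 := by linarith
    have hm : (2*y2 + x1) * (2*x1 + y2) < x2 * y1 :=
      mul_lt_mul'' h2 h1 (by linarith) (by linarith)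
    rcases hdet with hdet|hdet <;> nlinarith [sq_nonneg x1, sq_nonneg y2]
  · linarith

lemma lemC (x1 x2 y1 y2 : ℤ) (hx1 : 1 ≤ x1) (hy1 : 1 ≤ y1)
    (hdet : x2*y1 - x1*y2 = 1 ∨ x2*y1 - x1*y2 = -1)
    (hA : x1 + |x2| < |x1-y1| + |x2-y2|)
    (hB : y1 + |y2| < |x1-y1| + |x2-y2|) : False := by
  rcases le_or_gt 0 x2 with hx2 | hx2 <;> rcases le_or_gt 0 y2 with hy2 | hy2
  · exact lemA x1 x2 y1 y2 hx1 hy1 hx2 hy2 hdet hA hB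
  · -- x2 ≥ 0, y2 < 0
    have hprod : x2*y1 + x1*(-y2) = 1 := by
      rcases hdet with hdet|hdet
      · linarith
      · nlinarith [mul_nonneg hx2 (by linarith : (0:ℤ) ≤ y1),
          mul_pos (by linarith : (0:ℤ) < x1) (by linarith : (0:ℤ) < -y2)]
    have hx1e : x1 = 1 := by
      nlinarith [mul_nonneg hx2 (by linarith : (0:ℤ) ≤ y1),
        mul_le_mul hx1 (by linarith : (1:ℤ) ≤ -y2) (by norm_num) (by linarith : (0:ℤ) ≤ x1)]
    have hy2e : y2 = -1 := by
      nlinarith [mul_nonneg hx2 (by linarith : (0:ℤ) ≤ y1)]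
    have hx2e : x2 = 0 := by
      have : x2 * y1 = 0 := by rw [hx1e, hy2e] at hprod; linarith
      rcases mul_eq_zero.1 this with h|h
      · exact h
      · omega
    subst hx1e; subst hy2e; subst hx2e
    rcases abs_cases (1 - y1) with ⟨e,s⟩|⟨e,s⟩ <;> simp [e] at hB <;> omega
  · -- x2 < 0, y2 ≥ 0
    have hprod : (-x2)*y1 + x1*y2 = 1 := by
      rcases hdet with hdet|hdet
      · nlinarith [mul_nonneg (by linarith : (0:ℤ) ≤ x1) hy2,
          mul_pos (by linarith : (0:ℤ) < -x2) (by linarith : (0:ℤ) < y1)]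
      · linarith
    have hx2e : x2 = -1 := by
      nlinarith [mul_nonneg (by linarith : (0:ℤ) ≤ x1) hy2,
        mul_le_mul (by linarith : (1:ℤ) ≤ -x2) hy1 (by norm_num) (by linarith : (0:ℤ) ≤ -x2)]
    have hy1e : y1 = 1 := by
      nlinarith [mul_nonneg (by linarith : (0:ℤ) ≤ x1) hy2]
    have hy2e : y2 = 0 := by
      have : x1 * y2 = 0 := by rw [hx2e, hy1e] at hprod; linarith
      rcases mul_eq_zero.1 this with h|h
      · omega
      · exact h
    subst hx2e; subst hy1e; subst hy2e
    rcases abs_cases (x1 - 1) with ⟨e,s⟩|⟨e,s⟩ <;> simp [e] at hA <;> omega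
  · -- both negative: reduce to lemA
    have hA' : x1 + |(-x2)| < |x1-y1| + |(-x2) - (-y2)| := by
      rw [abs_neg]
      have : (-x2) - (-y2) = -(x2 - y2) := by ring
      rw [this, abs_neg]; exact hA
    have hB' : y1 + |(-y2)| < |x1-y1| + |(-x2) - (-y2)| := by
      rw [abs_neg]
      have : (-x2) - (-y2) = -(x2 - y2) := by ring
      rw [this, abs_neg]; exact hB
    exact lemA x1 (-x2) y1 (-y2) hx1 hy1 (by linarith) (by linarith)
      (hdet.imp (fun h => by linarith) (fun h => by linarith)).symm hA' hB'

lemma abs_add_of_mul_nonneg (a b : ℤ) (h : 0 ≤ a * b) : |a + b| = |a| + |b| := by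
  rcases le_or_gt 0 a with ha|ha <;> rcases le_or_gt 0 b with hb|hb
  · rw [abs_of_nonneg ha, abs_of_nonneg hb, abs_of_nonneg (by linarith)]
  · have hb0 : a = 0 := by nlinarith
    subst hb0; simp
  · have ha0 : b = 0 := by nlinarith
    subst ha0; simp
  · rw [abs_of_neg ha, abs_of_neg hb, abs_of_neg (by linarith)]; ring

lemma nonneg_fst (v1 v2 w1 w2 : ℤ)
    (hdet : v1*w2 - v2*w1 = 1 ∨ v1*w2 - v2*w1 = -1)
    (hA : |v1| + |v2| < |v1+w1| + |v2+w2|)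
    (hB : |w1| + |w2| < |v1+w1| + |v2+w2|) : 0 ≤ v1 * w1 := by
  by_contra h
  push_neg at h
  rcases lt_or_ge 0 v1 with hv|hv
  · -- v1 > 0 > w1
    have hw : w1 < 0 := by nlinarith
    rw [abs_of_pos hv] at hA
    rw [abs_of_neg hw] at hB
    refine lemC v1 v2 (-w1) (-w2) (by omega) (by omega)
      (hdet.imp (fun hd => by linarith) (fun hd => by linarith)) ?_ ?_
    · have h1 : v1 - -w1 = v1 + w1 := by ring
      have h2 : v2 - -w2 = v2 + w2 := by ring
      rw [h1, h2]; exact hA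
    · have h1 : v1 - -w1 = v1 + w1 := by ring
      have h2 : v2 - -w2 = v2 + w2 := by ring
      rw [h1, h2, abs_neg]; exact hB
  · -- v1 ≤ 0, so v1 < 0 < w1
    have hv' : v1 < 0 := by
      rcases lt_or_eq_of_le hv with h'|h'
      · exact h'
      · subst h'; simp at h
    have hw : 0 < w1 := by nlinarith
    rw [abs_of_neg hv'] at hA
    rw [abs_of_pos hw] at hB
    have hdet' : w2 * -v1 - w1 * -v2 = 1 ∨ w2 * -v1 - w1 * -v2 = -1 := by
      rcases hdet with hd|hd
      · exact Or.inr (by linarith)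
      · exact Or.inl (by linarith)
    refine lemC w1 w2 (-v1) (-v2) (by omega) (by omega) hdet' ?_ ?_
    · have h1 : w1 - -v1 = v1 + w1 := by ring
      have h2 : w2 - -v2 = v2 + w2 := by ring
      rw [h1, h2]; exact hB
    · have h1 : w1 - -v1 = v1 + w1 := by ring
      have h2 : w2 - -v2 = v2 + w2 := by ring
      rw [h1, h2, abs_neg]; exact hA

lemma key_lemma (v1 v2 w1 w2 : ℤ)
    (hdet : v1*w2 - v2*w1 = 1 ∨ v1*w2 - v2*w1 = -1)
    (hA : |v1| + |v2| < |v1+w1| + |v2+w2|)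
    (hB : |w1| + |w2| < |v1+w1| + |v2+w2|) :
    |v1+w1| + |v2+w2| = (|v1| + |v2|) + (|w1| + |w2|) := by
  have h1 : 0 ≤ v1 * w1 := nonneg_fst v1 v2 w1 w2 hdet hA hB
  have hdet' : v2*w1 - v1*w2 = 1 ∨ v2*w1 - v1*w2 = -1 := by
    rcases hdet with hd|hd
    · exact Or.inr (by linarith)
    · exact Or.inl (by linarith)
  have h2 : 0 ≤ v2 * w2 := nonneg_fst v2 v1 w2 w1 hdet' (by linarith) (by linarith)
  rw [abs_add_of_mul_nonneg _ _ h1, abs_add_of_mul_nonneg _ _ h2]; ring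

lemma mem_hull_combo (A B C : EuclideanSpace ℝ (Fin 2)) (s t : ℝ)
    (hs : 0 ≤ s) (ht : 0 ≤ t) (hst : s + t ≤ 1) :
    (1 - s - t) • A + s • B + t • C ∈ convexHull ℝ ({A, B, C} : Set (EuclideanSpace ℝ (Fin 2))) := by
  have h := Convex.sum_mem (t := (Finset.univ : Finset (Fin 3)))
    (w := ![1 - s - t, s, t]) (z := ![A, B, C])
    (convex_convexHull ℝ ({A, B, C} : Set (EuclideanSpace ℝ (Fin 2))))
    (by intro i _; fin_cases i <;> simp <;> linarith)
    (by simp [Fin.sum_univ_three]; ring)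
    (by intro i _; fin_cases i <;>
        exact subset_convexHull ℝ _ (by simp))
  simpa [Fin.sum_univ_three] using h

lemma latticePt_combo (a b c p : ℤ × ℤ) (s t : ℝ)
    (h1 : (p.1 : ℝ) = a.1 + s * ((b.1 : ℝ) - a.1) + t * ((c.1 : ℝ) - a.1))
    (h2 : (p.2 : ℝ) = a.2 + s * ((b.2 : ℝ) - a.2) + t * ((c.2 : ℝ) - a.2)) :
    latticePt p = (1 - s - t) • latticePt a + s • latticePt b + t • latticePt c := by
  ext i
  fin_cases i <;>
    simp [latticePt, PiLp.add_apply, PiLp.smul_apply,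
      smul_eq_mul]
  · rw [h1]; ring
  · rw [h2]; ring

lemma extra_point (a b c : ℤ × ℤ)
    (hD2 : 2 ≤ (b.1 - a.1) * (c.2 - a.2) - (b.2 - a.2) * (c.1 - a.1)) :
    ∃ p : ℤ × ℤ, p ≠ a ∧ p ≠ b ∧ p ≠ c ∧
      latticePt p ∈ convexHull ℝ ({latticePt a, latticePt b, latticePt c} :
        Set (EuclideanSpace ℝ (Fin 2))) := by
  set u1 := b.1 - a.1 with hu1
  set u2 := b.2 - a.2 with hu2
  set v1 := c.1 - a.1 with hv1
  set v2 := c.2 - a.2 with hv2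
  set D := u1 * v2 - u2 * v1 with hD
  by_cases hg : Int.gcd u1 u2 = 1
  · -- primitive edge case: Bezout
    have hbez : u1 * Int.gcdA u1 u2 + u2 * Int.gcdB u1 u2 = 1 := by
      have := Int.gcd_eq_gcd_ab u1 u2
      rw [hg] at this; exact_mod_cast this.symm
    set m := Int.gcdA u1 u2
    set n := Int.gcdB u1 u2
    set e1 := -n with he1
    set e2 := m with he2
    have hbd : u1 * e2 - u2 * e1 = 1 := by rw [he1, he2]; linarith
    set α := v1 * e2 - v2 * e1 with hal
    have hv1' : v1 = α * u1 + D * e1 := by rw [hal, hD]; linear_combination (-v1) * hbd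
    have hv2' : v2 = α * u2 + D * e2 := by rw [hal, hD]; linear_combination (-v2) * hbd
    set X := (α + D - 1) / D with hX
    have hDpos : (0:ℤ) < D := by linarith
    have hmod := Int.mul_ediv_add_emod (α + D - 1) D
    have hr0 : 0 ≤ (α + D - 1) % D := Int.emod_nonneg _ (by linarith)
    have hrD : (α + D - 1) % D < D := Int.emod_lt_of_pos _ hDpos
    have hXl : α ≤ D * X := by rw [hX]; linarith
    have hXu : D * X ≤ α + D - 1 := by rw [hX]; linarith
    refine ⟨(a.1 + X * u1 + e1, a.2 + X * u2 + e2), ?_, ?_, ?_, ?_⟩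
    · intro h
      rw [Prod.ext_iff] at h
      obtain ⟨h1, h2⟩ := h
      simp only at h1 h2
      have e1z : X * u1 + e1 = 0 := by linarith
      have e2z : X * u2 + e2 = 0 := by linarith
      have : (1:ℤ) = 0 := by linear_combination u1 * e2z - u2 * e1z - hbd
      norm_num at this
    · intro h
      rw [Prod.ext_iff] at h
      obtain ⟨h1, h2⟩ := h
      simp only at h1 h2
      have e1z : (X - 1) * u1 + e1 = 0 := by linarith [h1, hu1]
      have e2z : (X - 1) * u2 + e2 = 0 := by linarith [h2, hu2]
      have : (1:ℤ) = 0 := by linear_combination u1 * e2z - u2 * e1z - hbd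
      norm_num at this
    · intro h
      rw [Prod.ext_iff] at h
      obtain ⟨h1, h2⟩ := h
      simp only at h1 h2
      have e1z : X * u1 + e1 = v1 := by linarith [h1, hv1]
      have e2z : X * u2 + e2 = v2 := by linarith [h2, hv2]
      have hc1 : (X - α) * u1 = (D - 1) * e1 := by linear_combination e1z + hv1'
      have hc2 : (X - α) * u2 = (D - 1) * e2 := by linear_combination e2z + hv2'
      have : D - 1 = 0 := by linear_combination (1 - D) * hbd + u2 * hc1 - u1 * hc2
      omega
    · have hDR : (0:ℝ) < (D:ℝ) := by exact_mod_cast hDpos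
      have hDne : ((D:ℝ)) ≠ 0 := ne_of_gt hDR
      set s : ℝ := (X : ℝ) - (α : ℝ) / D with hs
      set t : ℝ := 1 / (D : ℝ) with ht
      have hsn : 0 ≤ s := by
        rw [hs, sub_nonneg, div_le_iff₀ hDR]
        have : (α:ℝ) ≤ (D:ℝ) * X := by exact_mod_cast hXl
        linarith
      have htn : 0 ≤ t := by rw [ht]; positivity
      have hstn : s + t ≤ 1 := by
        rw [hs, ht]
        have h1 : (D:ℝ) * X ≤ (α:ℝ) + D - 1 := by exact_mod_cast hXu
        have e : (1:ℝ) - ((X:ℝ) - (α:ℝ)/D + 1/D) = ((α:ℝ) + D - 1 - D*X)/D := by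
          field_simp; ring
        rw [← sub_nonneg, e]
        apply div_nonneg _ (le_of_lt hDR)
        linarith
      have uR1 : ((u1:ℤ):ℝ) = (b.1:ℝ) - a.1 := by rw [hu1]; push_cast; ring
      have uR2 : ((u2:ℤ):ℝ) = (b.2:ℝ) - a.2 := by rw [hu2]; push_cast; ring
      have vR1 : ((v1:ℤ):ℝ) = (c.1:ℝ) - a.1 := by rw [hv1]; push_cast; ring
      have vR2 : ((v2:ℤ):ℝ) = (c.2:ℝ) - a.2 := by rw [hv2]; push_cast; ring
      have R1 : (c.1:ℝ) - a.1 = (α:ℝ) * ((b.1:ℝ) - a.1) + (D:ℝ) * (e1:ℝ) := by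
        rw [← uR1, ← vR1]; exact_mod_cast hv1'
      have R2 : (c.2:ℝ) - a.2 = (α:ℝ) * ((b.2:ℝ) - a.2) + (D:ℝ) * (e2:ℝ) := by
        rw [← uR2, ← vR2]; exact_mod_cast hv2'
      have heq := latticePt_combo a b c (a.1 + X * u1 + e1, a.2 + X * u2 + e2) s t ?_ ?_
      · rw [heq]; exact mem_hull_combo _ _ _ s t hsn htn hstn
      · show ((a.1 + X * u1 + e1 : ℤ) : ℝ) = _
        rw [hs, ht, R1]
        push_cast [uR1]
        field_simp
        ring
      · show ((a.2 + X * u2 + e2 : ℤ) : ℝ) = _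
        rw [hs, ht, R2]
        push_cast [uR2]
        field_simp
        ring
  · -- non-primitive: point on edge ab
    have hgz : Int.gcd u1 u2 ≠ 0 := by
      intro h0
      rw [Int.gcd_eq_zero_iff] at h0
      rw [hD, h0.1, h0.2] at hD2
      simp at hD2
    have hg2 : 2 ≤ (Int.gcd u1 u2 : ℤ) := by omega
    obtain ⟨k1, hk1⟩ : ((Int.gcd u1 u2 : ℤ)) ∣ u1 := Int.gcd_dvd_left u1 u2
    obtain ⟨k2, hk2⟩ : ((Int.gcd u1 u2 : ℤ)) ∣ u2 := Int.gcd_dvd_right u1 u2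
    set g : ℤ := (Int.gcd u1 u2 : ℤ) with hgdef
    have hgR : (0:ℝ) < (g:ℝ) := by exact_mod_cast (by omega : (0:ℤ) < g)
    have hgne : ((g:ℝ)) ≠ 0 := ne_of_gt hgR
    refine ⟨(a.1 + k1, a.2 + k2), ?_, ?_, ?_, ?_⟩
    · intro h
      rw [Prod.ext_iff] at h
      obtain ⟨h1, h2⟩ := h
      simp only at h1 h2
      have hk1z : k1 = 0 := by linarith
      have hk2z : k2 = 0 := by linarith
      rw [hD, hk1, hk2, hk1z, hk2z] at hD2
      simp at hD2
    · intro h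
      rw [Prod.ext_iff] at h
      obtain ⟨h1, h2⟩ := h
      simp only at h1 h2
      have hb1 : k1 = u1 := by rw [hu1]; linarith
      have hb2 : k2 = u2 := by rw [hu2]; linarith
      have hz1 : k1 * (g - 1) = 0 := by linear_combination -hb1 - hk1
      have hz2 : k2 * (g - 1) = 0 := by linear_combination -hb2 - hk2
      have hk1z : k1 = 0 := by
        rcases mul_eq_zero.1 hz1 with h|h
        · exact h
        · omega
      have hk2z : k2 = 0 := by
        rcases mul_eq_zero.1 hz2 with h|h
        · exact h
        · omega
      rw [hD, hk1, hk2, hk1z, hk2z] at hD2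
      simp at hD2
    · intro h
      rw [Prod.ext_iff] at h
      obtain ⟨h1, h2⟩ := h
      simp only at h1 h2
      have hc1 : k1 = v1 := by rw [hv1]; linarith
      have hc2 : k2 = v2 := by rw [hv2]; linarith
      have : D = 0 := by
        rw [hD]
        linear_combination v2 * hk1 - v1 * hk2 + g * v2 * hc1 - g * v1 * hc2
      omega
    · have hk1R : ((u1:ℤ):ℝ) = (g:ℝ) * (k1:ℝ) := by exact_mod_cast hk1
      have hk2R : ((u2:ℤ):ℝ) = (g:ℝ) * (k2:ℝ) := by exact_mod_cast hk2
      have uR1 : ((u1:ℤ):ℝ) = (b.1:ℝ) - a.1 := by rw [hu1]; push_cast; ring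
      have uR2 : ((u2:ℤ):ℝ) = (b.2:ℝ) - a.2 := by rw [hu2]; push_cast; ring
      have heq := latticePt_combo a b c (a.1 + k1, a.2 + k2) (1/(g:ℝ)) 0 ?_ ?_
      · rw [heq]
        refine mem_hull_combo _ _ _ _ _ (by positivity) le_rfl ?_
        rw [add_zero, div_le_one hgR]
        exact_mod_cast (by omega : (1:ℤ) ≤ g)
      · show ((a.1 + k1 : ℤ) : ℝ) = _
        rw [← uR1, hk1R]
        push_cast
        field_simp
        ring
      · show ((a.2 + k2 : ℤ) : ℝ) = _
        rw [← uR2, hk2R]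
        push_cast
        field_simp
        ring

/-- The `ℓ₁` length of an integer vector. -/
def l1 (v : ℤ × ℤ) : ℤ := |v.1| + |v.2|

lemma l1_sub (p q : ℤ × ℤ) : l1 (p - q) = |p.1 - q.1| + |p.2 - q.2| := by
  simp [l1]

/-- In an empty lattice triangle `(a,b,c)` in which the edge `ab` is strictly the
longest in `ℓ₁` norm, the `ℓ₁` length of `ab` equals the sum of the `ℓ₁` lengths
of the other two edges. -/
theorem empty_lattice_triangle_l1_additive (a b c : ℤ × ℤ)
    (hnd : (b.1 - a.1) * (c.2 - a.2) - (b.2 - a.2) * (c.1 - a.1) ≠ 0)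
    (hempty : ∀ p : ℤ × ℤ,
      latticePt p ∈ convexHull ℝ ({latticePt a, latticePt b, latticePt c} :
        Set (EuclideanSpace ℝ (Fin 2))) → p = a ∨ p = b ∨ p = c)
    (h2 : l1 (c - b) < l1 (b - a))
    (h3 : l1 (a - c) < l1 (b - a)) :
    l1 (b - a) = l1 (c - b) + l1 (a - c) := by
  have hDor : (b.1 - a.1) * (c.2 - a.2) - (b.2 - a.2) * (c.1 - a.1) = 1 ∨
      (b.1 - a.1) * (c.2 - a.2) - (b.2 - a.2) * (c.1 - a.1) = -1 := by
    by_contra hcon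
    push_neg at hcon
    have hcase : 2 ≤ (b.1 - a.1) * (c.2 - a.2) - (b.2 - a.2) * (c.1 - a.1) ∨
        (b.1 - a.1) * (c.2 - a.2) - (b.2 - a.2) * (c.1 - a.1) ≤ -2 := by omega
    rcases hcase with hpos | hneg
    · obtain ⟨p, pa, pb, pc, hmem⟩ := extra_point a b c hpos
      rcases hempty p hmem with h | h | h
      · exact pa h
      · exact pb h
      · exact pc h
    · have hpos' : 2 ≤ (c.1 - a.1) * (b.2 - a.2) - (c.2 - a.2) * (b.1 - a.1) := by linarith
      obtain ⟨p, pa, pc, pb, hmem⟩ := extra_point a c b hpos'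
      have hset : ({latticePt a, latticePt c, latticePt b} :
          Set (EuclideanSpace ℝ (Fin 2))) = {latticePt a, latticePt b, latticePt c} := by
        rw [Set.pair_comm (latticePt c) (latticePt b)]
      rw [hset] at hmem
      rcases hempty p hmem with h | h | h
      · exact pa h
      · exact pb h
      · exact pc h
  have hdet' : (c.1 - b.1) * (a.2 - c.2) - (c.2 - b.2) * (a.1 - c.1) = 1 ∨
      (c.1 - b.1) * (a.2 - c.2) - (c.2 - b.2) * (a.1 - c.1) = -1 := by
    rcases hDor with h | h
    · exact Or.inl (by linear_combination h)
    · exact Or.inr (by linear_combination h)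
  have e1 : (c.1 - b.1) + (a.1 - c.1) = -(b.1 - a.1) := by ring
  have e2 : (c.2 - b.2) + (a.2 - c.2) = -(b.2 - a.2) := by ring
  simp only [l1_sub] at h2 h3 ⊢
  have hA' : |c.1 - b.1| + |c.2 - b.2| <
      |(c.1 - b.1) + (a.1 - c.1)| + |(c.2 - b.2) + (a.2 - c.2)| := by
    rw [e1, e2, abs_neg, abs_neg]; linarith
  have hB' : |a.1 - c.1| + |a.2 - c.2| <
      |(c.1 - b.1) + (a.1 - c.1)| + |(c.2 - b.2) + (a.2 - c.2)| := by
    rw [e1, e2, abs_neg, abs_neg]; linarith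
  have hkey := key_lemma (c.1 - b.1) (c.2 - b.2) (a.1 - c.1) (a.2 - c.2) hdet' hA' hB'
  rw [e1, e2, abs_neg, abs_neg] at hkey
  linarith
end

section
/- Let e be an edge of a lattice triangulation that is flippable, i.e., the two empty lattice triangles containing e form a parallelogram with e as a diagonal. Let f be the other diagonal, and let ψ be the ℓ₁ length of the shortest among the four sides of the parallelogram. Then | |f|₁ − |e|₁ | = 2ψ whenever e is not a unit diagonal; more precisely, if e is the longer diagonal then |e|₁ = |f|₁ + 2ψ, and if e is the shorter diagonal then |f|₁ = |e|₁ + 2ψ. -/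
lemma latticePt_apply_zero (p : ℤ × ℤ) : latticePt p 0 = (p.1 : ℝ) := rfl

lemma latticePt_apply_one (p : ℤ × ℤ) : latticePt p 1 = (p.2 : ℝ) := rfl

lemma mem_hull3 {P Q R y : EuclideanSpace ℝ (Fin 2)} {a b c : ℝ}
    (ha : 0 ≤ a) (hb : 0 ≤ b) (hc : 0 ≤ c) (habc : a + b + c = 1)
    (hy : y = a • P + b • Q + c • R) :
    y ∈ convexHull ℝ ({P, Q, R} : Set (EuclideanSpace ℝ (Fin 2))) := by
  have hP : P ∈ convexHull ℝ ({P, Q, R} : Set (EuclideanSpace ℝ (Fin 2))) :=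
    subset_convexHull ℝ _ (by simp)
  have hQ : Q ∈ convexHull ℝ ({P, Q, R} : Set (EuclideanSpace ℝ (Fin 2))) :=
    subset_convexHull ℝ _ (by simp)
  have hR : R ∈ convexHull ℝ ({P, Q, R} : Set (EuclideanSpace ℝ (Fin 2))) :=
    subset_convexHull ℝ _ (by simp)
  have hconv : Convex ℝ (convexHull ℝ ({P, Q, R} : Set (EuclideanSpace ℝ (Fin 2)))) :=
    convex_convexHull ℝ _
  rcases eq_or_lt_of_le (add_nonneg hb hc) with h0 | h0
  · have hb0 : b = 0 := by linarith [hb, hc]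
    have hc0 : c = 0 := by linarith [hb, hc]
    have ha1 : a = 1 := by linarith
    rw [hy, hb0, hc0, ha1]
    simpa using hP
  · set M : EuclideanSpace ℝ (Fin 2) := (b / (b + c)) • Q + (c / (b + c)) • R with hM
    have hMmem : M ∈ convexHull ℝ ({P, Q, R} : Set (EuclideanSpace ℝ (Fin 2))) :=
      hconv hQ hR (div_nonneg hb h0.le) (div_nonneg hc h0.le) (by field_simp)
    have : y = a • P + (b + c) • M := by
      rw [hy, hM, smul_add, smul_smul, smul_smul]
      rw [mul_div_cancel₀ _ (ne_of_gt h0), mul_div_cancel₀ _ (ne_of_gt h0)]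
      abel
    rw [this]
    exact hconv hP hMmem ha (by linarith) (by linarith)

lemma latticePt_add_smul (p x : ℤ × ℤ) (a b c : ℝ) (q r : ℤ × ℤ)
    (habc : a + b + c = 1)
    (h0 : ((p.1 : ℝ) + x.1) = a * p.1 + b * q.1 + c * r.1)
    (h1 : ((p.2 : ℝ) + x.2) = a * p.2 + b * q.2 + c * r.2) :
    latticePt (p + x) = a • latticePt p + b • latticePt q + c • latticePt r := by
  apply PiLp.ext
  intro i
  fin_cases i
  · show ((p + x).1 : ℝ) = (a • latticePt p + b • latticePt q + c • latticePt r) 0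
    simp only [PiLp.add_apply, PiLp.smul_apply, latticePt_apply_zero, smul_eq_mul, Prod.fst_add]
    push_cast
    exact h0
  · show ((p + x).2 : ℝ) = (a • latticePt p + b • latticePt q + c • latticePt r) 1
    simp only [PiLp.add_apply, PiLp.smul_apply, latticePt_apply_one, smul_eq_mul, Prod.snd_add]
    push_cast
    exact h1


lemma S1 (x y : ℤ) (h : 0 ≤ x * y) : |x + y| - |x - y| = 2 * min |x| |y| := by
  rcases le_total 0 x with hx | hx <;> rcases le_total 0 y with hy | hy
  · rw [abs_of_nonneg hx, abs_of_nonneg hy, abs_of_nonneg (by linarith)]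
    rcases le_total x y with hxy | hxy
    · rw [abs_of_nonpos (by linarith)]; omega
    · rw [abs_of_nonneg (by linarith)]; omega
  · have h0 : x * y ≤ 0 := mul_nonpos_of_nonneg_of_nonpos hx hy
    have : x = 0 ∨ y = 0 := mul_eq_zero.mp (le_antisymm h0 h)
    rcases this with rfl | rfl <;> simp [abs_sub_comm]
  · have h0 : x * y ≤ 0 := mul_nonpos_of_nonpos_of_nonneg hx hy
    have : x = 0 ∨ y = 0 := mul_eq_zero.mp (le_antisymm h0 h)
    rcases this with rfl | rfl <;> simp [abs_sub_comm]
  · rw [abs_of_nonpos hx, abs_of_nonpos hy, abs_of_nonpos (by linarith)]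
    rcases le_total x y with hxy | hxy
    · rw [abs_of_nonpos (by linarith)]; omega
    · rw [abs_of_nonneg (by linarith)]; omega

lemma S2 (x y : ℤ) (h : x * y ≤ 0) : |x - y| - |x + y| = 2 * min |x| |y| := by
  have := S1 x (-y) (by nlinarith)
  simpa [sub_neg_eq_add, ← sub_eq_add_neg] using this

-- S3: same-sign products with difference ±1
lemma S3 (u v : ℤ) (h : 0 ≤ u * v) (he : u - v = 1 ∨ u - v = -1) :
    |u| - |v| = 1 ∨ |u| - |v| = -1 := by
  rcases le_total 0 u with hu | hu <;> rcases le_total 0 v with hv | hv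
  · rw [abs_of_nonneg hu, abs_of_nonneg hv]; omega
  · have h0 : u * v ≤ 0 := mul_nonpos_of_nonneg_of_nonpos hu hv
    have : u = 0 ∨ v = 0 := mul_eq_zero.mp (le_antisymm h0 h)
    rcases this with rfl | rfl <;> rw [abs_of_nonneg (by omega), abs_of_nonpos (by omega)] <;> omega
  · have h0 : u * v ≤ 0 := mul_nonpos_of_nonpos_of_nonneg hu hv
    have : u = 0 ∨ v = 0 := mul_eq_zero.mp (le_antisymm h0 h)
    rcases this with rfl | rfl <;> rw [abs_of_nonpos (by omega), abs_of_nonneg (by omega)] <;> omega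
  · rw [abs_of_nonpos hu, abs_of_nonpos hv]; omega

-- S5: opposite-sign products with difference ±1
lemma S5 (u v : ℤ) (h : u * v ≤ 0) (he : u - v = 1 ∨ u - v = -1) :
    |u| + |v| = 1 := by
  rcases le_total 0 u with hu | hu <;> rcases le_total 0 v with hv | hv
  · have h0 : 0 ≤ u * v := mul_nonneg hu hv
    have : u = 0 ∨ v = 0 := mul_eq_zero.mp (le_antisymm h h0)
    rcases this with rfl | rfl <;> rw [abs_of_nonneg (by omega), abs_of_nonneg (by omega)] <;> omega
  · rw [abs_of_nonneg hu, abs_of_nonpos hv]; omega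
  · rw [abs_of_nonpos hu, abs_of_nonneg hv]; omega
  · have h0 : 0 ≤ u * v := by nlinarith
    have : u = 0 ∨ v = 0 := mul_eq_zero.mp (le_antisymm h h0)
    rcases this with rfl | rfl <;> rw [abs_of_nonpos (by omega), abs_of_nonpos (by omega)] <;> omega

-- S4: product equal to ±1 gives abs both 1
lemma S4 (m n : ℤ) (h : m * n = 1 ∨ m * n = -1) : |m| = 1 ∧ |n| = 1 := by
  have hm : IsUnit m := by
    rcases h with h | h
    · exact IsUnit.of_mul_eq_one n h
    · exact IsUnit.of_mul_eq_one (-n) (by linarith [h])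
  have hn : IsUnit n := by
    rcases h with h | h
    · exact IsUnit.of_mul_eq_one m (by linarith [mul_comm m n])
    · exact IsUnit.of_mul_eq_one (-m) (by nlinarith)
  rcases Int.isUnit_iff.mp hm with rfl | rfl <;> rcases Int.isUnit_iff.mp hn with rfl | rfl <;> simp

-- DOM: dominance lemma for nonnegative components
lemma DOM (x1 x2 y1 y2 : ℤ) (hx1 : 0 ≤ x1) (hx2 : 0 ≤ x2) (hy1 : 0 ≤ y1) (hy2 : 0 ≤ y2)
    (hdet : x1 * y2 - x2 * y1 = 1 ∨ x1 * y2 - x2 * y1 = -1) :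
    (x1 ≤ y1 ∧ x2 ≤ y2) ∨ (y1 ≤ x1 ∧ y2 ≤ x2) ∨ (x1 * y1 = 0 ∧ x2 * y2 = 0) := by
  by_contra hc
  push_neg at hc
  obtain ⟨hA, hB, hC⟩ := hc
  rcases lt_trichotomy x1 y1 with h1 | h1 | h1
  · have h2 : y2 < x2 := hA h1.le
    have key : (x1 + 1) * (y2 + 1) ≤ y1 * x2 :=
      mul_le_mul (by omega) (by omega) (by omega) (by omega)
    have hle : x1 * y2 - x2 * y1 ≤ -(x1 + y2 + 1) := by nlinarith
    have hx10 : x1 = 0 ∧ y2 = 0 := by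
      constructor <;> nlinarith [hdet.resolve_left (by omega), hle]
    obtain ⟨hx10, hy20⟩ := hx10
    exact hC (by rw [hx10]; ring) (by rw [hy20]; ring)
  · subst h1
    have h2 : x2 < y2 := hB le_rfl
    have h2' : y2 < x2 := hA le_rfl
    omega
  · have h2 : x2 < y2 := hB h1.le
    have key : (y1 + 1) * (x2 + 1) ≤ x1 * y2 :=
      mul_le_mul (by omega) (by omega) (by omega) (by omega)
    have hle : y1 + x2 + 1 ≤ x1 * y2 - x2 * y1 := by nlinarith
    have hx10 : y1 = 0 ∧ x2 = 0 := by
      constructor <;> nlinarith [hdet.resolve_right (by omega), hle]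
    obtain ⟨hy10, hx20⟩ := hx10
    exact hC (by rw [hy10]; ring) (by rw [hx20]; ring)

lemma ZEROLEM (a1 a2 b1 b2 : ℤ)
    (hdet : a1 * b2 - a2 * b1 = 1 ∨ a1 * b2 - a2 * b1 = -1)
    (hz1 : a1 = 0 ∨ b1 = 0) (hz2 : a2 = 0 ∨ b2 = 0) :
    |a1 + b1| = 1 ∧ |a2 + b2| = 1 := by
  rcases hz1 with rfl | rfl <;> rcases hz2 with rfl | rfl
  · simp at hdet
  · have := S4 a2 b1 (by rcases hdet with h | h <;> [right; left] <;> linarith)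
    simpa using ⟨this.2, this.1⟩
  · have := S4 a1 b2 (by rcases hdet with h | h <;> [left; right] <;> linarith)
    simpa using this
  · simp at hdet



lemma S6 (m n : ℤ) (hm : 0 ≤ m) (hn : 0 ≤ n) (h : m * n = 1) : m = 1 ∧ n = 1 := by
  have hm1 : 1 ≤ m := by nlinarith
  have hn1 : 1 ≤ n := by nlinarith
  constructor <;> nlinarith

lemma MIXED (a1 a2 b1 b2 : ℤ)
    (hdet : a1 * b2 - a2 * b1 = 1 ∨ a1 * b2 - a2 * b1 = -1)
    (hnu : ¬ (|a1 + b1| = 1 ∧ |a2 + b2| = 1))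
    (h1 : 0 ≤ a1 * b1) (h2 : a2 * b2 ≤ 0) :
    |(|a1 - b1| + |a2 - b2|) - (|a1 + b1| + |a2 + b2|)| =
      2 * min (|a1| + |a2|) (|b1| + |b2|) := by
  have n1 : 0 ≤ |a1| := abs_nonneg _
  have n2 : 0 ≤ |a2| := abs_nonneg _
  have n3 : 0 ≤ |b1| := abs_nonneg _
  have n4 : 0 ≤ |b2| := abs_nonneg _
  have e1 := S1 a1 b1 h1
  have e2 := S2 a2 b2 h2
  have hprod : (a1 * b2) * (a2 * b1) ≤ 0 := by nlinarith
  have h5 := S5 (a1 * b2) (a2 * b1) hprod hdet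
  rw [abs_mul, abs_mul] at h5
  have hcase : (|a1| * |b2| = 0 ∧ |a2| * |b1| = 1) ∨ (|a1| * |b2| = 1 ∧ |a2| * |b1| = 0) := by
    have hp1 : 0 ≤ |a1| * |b2| := mul_nonneg n1 n4
    have hp2 : 0 ≤ |a2| * |b1| := mul_nonneg n2 n3
    omega
  rcases hcase with ⟨hz, ho⟩ | ⟨ho, hz⟩
  · -- |a2| = 1, |b1| = 1 ; a1 = 0 or b2 = 0
    obtain ⟨ha2, hb1⟩ := S6 _ _ n2 n3 ho
    have hz' : a1 = 0 ∨ b2 = 0 := by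
      rcases mul_eq_zero.mp hz with h | h
      · exact Or.inl (abs_eq_zero.mp h)
      · exact Or.inr (abs_eq_zero.mp h)
    rcases hz' with h | h
    · rcases eq_or_ne b2 0 with hb2 | hb2
      · exact absurd (ZEROLEM a1 a2 b1 b2 hdet (Or.inl h) (Or.inr hb2)) hnu
      · have hb2' : 1 ≤ |b2| := abs_pos.mpr hb2
        have ha1 : |a1| = 0 := abs_eq_zero.mpr h
        have f1 : |a1 - b1| = |b1| := by rw [h, zero_sub, abs_neg]
        have f2 : |a1 + b1| = |b1| := by rw [h, zero_add]
        rw [abs_of_nonneg (by omega)]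
        omega
    · rcases eq_or_ne a1 0 with ha1 | ha1
      · exact absurd (ZEROLEM a1 a2 b1 b2 hdet (Or.inl ha1) (Or.inr h)) hnu
      · have ha1' : 1 ≤ |a1| := abs_pos.mpr ha1
        have hb2 : |b2| = 0 := abs_eq_zero.mpr h
        have f1 : |a2 - b2| = |a2| := by rw [h, sub_zero]
        have f2 : |a2 + b2| = |a2| := by rw [h, add_zero]
        rw [abs_of_nonpos (by omega)]
        omega
  · -- |a1| = 1, |b2| = 1 ; a2 = 0 or b1 = 0
    obtain ⟨ha1, hb2⟩ := S6 _ _ n1 n4 ho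
    have hz' : a2 = 0 ∨ b1 = 0 := by
      rcases mul_eq_zero.mp hz with h | h
      · exact Or.inl (abs_eq_zero.mp h)
      · exact Or.inr (abs_eq_zero.mp h)
    rcases hz' with h | h
    · rcases eq_or_ne b1 0 with hb1 | hb1
      · exact absurd (ZEROLEM a1 a2 b1 b2 hdet (Or.inr hb1) (Or.inl h)) hnu
      · have hb1' : 1 ≤ |b1| := abs_pos.mpr hb1
        have ha2' : |a2| = 0 := abs_eq_zero.mpr h
        have f1 : |a2 - b2| = |b2| := by rw [h, zero_sub, abs_neg]
        have f2 : |a2 + b2| = |b2| := by rw [h, zero_add]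
        rw [abs_of_nonpos (by omega)]
        omega
    · rcases eq_or_ne a2 0 with ha2 | ha2
      · exact absurd (ZEROLEM a1 a2 b1 b2 hdet (Or.inr h) (Or.inl ha2)) hnu
      · have ha2' : 1 ≤ |a2| := abs_pos.mpr ha2
        have hb1' : |b1| = 0 := abs_eq_zero.mpr h
        have f1 : |a1 - b1| = |a1| := by rw [h, sub_zero]
        have f2 : |a1 + b1| = |a1| := by rw [h, add_zero]
        rw [abs_of_nonneg (by omega)]
        omega

-- the main arithmetic lemma
lemma key_arith (a1 a2 b1 b2 : ℤ)
    (hdet : a1 * b2 - a2 * b1 = 1 ∨ a1 * b2 - a2 * b1 = -1)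
    (hnu : ¬ (|a1 + b1| = 1 ∧ |a2 + b2| = 1)) :
    |(|b1 - a1| + |b2 - a2|) - (|a1 + b1| + |a2 + b2|)| =
      2 * min (|a1| + |a2|) (|b1| + |b2|) := by
  rw [abs_sub_comm b1 a1, abs_sub_comm b2 a2]
  have n1 : 0 ≤ |a1| := abs_nonneg _
  have n2 : 0 ≤ |a2| := abs_nonneg _
  have n3 : 0 ≤ |b1| := abs_nonneg _
  have n4 : 0 ≤ |b2| := abs_nonneg _
  rcases le_total 0 (a1 * b1) with h1 | h1 <;> rcases le_total 0 (a2 * b2) with h2 | h2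
  · -- both same-sign
    have e1 := S1 a1 b1 h1
    have e2 := S1 a2 b2 h2
    have hprod : 0 ≤ (a1 * b2) * (a2 * b1) := by nlinarith
    have h3 := S3 (a1 * b2) (a2 * b1) hprod hdet
    rw [abs_mul, abs_mul] at h3
    rcases DOM |a1| |a2| |b1| |b2| n1 n2 n3 n4 h3
      with ⟨hd1, hd2⟩ | ⟨hd1, hd2⟩ | ⟨hz1, hz2⟩
    · rw [abs_of_nonpos (by omega)]; omega
    · rw [abs_of_nonpos (by omega)]; omega
    · have hz1' : a1 = 0 ∨ b1 = 0 := by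
        rcases mul_eq_zero.mp hz1 with h | h
        · exact Or.inl (abs_eq_zero.mp h)
        · exact Or.inr (abs_eq_zero.mp h)
      have hz2' : a2 = 0 ∨ b2 = 0 := by
        rcases mul_eq_zero.mp hz2 with h | h
        · exact Or.inl (abs_eq_zero.mp h)
        · exact Or.inr (abs_eq_zero.mp h)
      exact absurd (ZEROLEM a1 a2 b1 b2 hdet hz1' hz2') hnu
  · exact MIXED a1 a2 b1 b2 hdet hnu h1 h2
  · -- swap coordinates and use MIXED
    rw [show |a1 - b1| + |a2 - b2| = |a2 - b2| + |a1 - b1| from add_comm _ _,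
        show |a1 + b1| + |a2 + b2| = |a2 + b2| + |a1 + b1| from add_comm _ _,
        show |a1| + |a2| = |a2| + |a1| from add_comm _ _,
        show |b1| + |b2| = |b2| + |b1| from add_comm _ _]
    exact MIXED a2 a1 b2 b1
      (by rcases hdet with h | h; exacts [Or.inr (by linarith), Or.inl (by linarith)])
      (fun ⟨x, y⟩ => hnu ⟨y, x⟩) h2 h1
  · -- both opposite-sign
    have e1 := S2 a1 b1 h1
    have e2 := S2 a2 b2 h2
    have hprod : 0 ≤ (a1 * b2) * (a2 * b1) := by nlinarith
    have h3 := S3 (a1 * b2) (a2 * b1) hprod hdet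
    rw [abs_mul, abs_mul] at h3
    rcases DOM |a1| |a2| |b1| |b2| n1 n2 n3 n4 h3
      with ⟨hd1, hd2⟩ | ⟨hd1, hd2⟩ | ⟨hz1, hz2⟩
    · rw [abs_of_nonneg (by omega)]; omega
    · rw [abs_of_nonneg (by omega)]; omega
    · have hz1' : a1 = 0 ∨ b1 = 0 := by
        rcases mul_eq_zero.mp hz1 with h | h
        · exact Or.inl (abs_eq_zero.mp h)
        · exact Or.inr (abs_eq_zero.mp h)
      have hz2' : a2 = 0 ∨ b2 = 0 := by
        rcases mul_eq_zero.mp hz2 with h | h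
        · exact Or.inl (abs_eq_zero.mp h)
        · exact Or.inr (abs_eq_zero.mp h)
      exact absurd (ZEROLEM a1 a2 b1 b2 hdet hz1' hz2') hnu

lemma SOLVE (c1 c2 d1 d2 D x1 x2 t u : ℤ) (hD : D ≠ 0)
    (hdet : c1 * d2 - c2 * d1 = D)
    (h1 : D * x1 = t * c1 + u * d1) (h2 : D * x2 = t * c2 + u * d2) :
    t = x1 * d2 - x2 * d1 ∧ u = c1 * x2 - c2 * x1 := by
  constructor
  · apply mul_left_cancel₀ hD
    linear_combination (-d2) * h1 + d1 * h2 - t * hdet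
  · apply mul_left_cancel₀ hD
    linear_combination c2 * h1 + (-c1) * h2 - u * hdet

lemma CORE0 (p q r : ℤ × ℤ) (D : ℤ) (hD : 0 < D)
    (hdet : (q.1 - p.1) * (r.2 - p.2) - (q.2 - p.2) * (r.1 - p.1) = D)
    (hempty : ∀ x : ℤ × ℤ,
      latticePt x ∈ convexHull ℝ ({latticePt p, latticePt q, latticePt r} :
        Set (EuclideanSpace ℝ (Fin 2))) → x = p ∨ x = q ∨ x = r)
    (x : ℤ × ℤ) (t u : ℤ)
    (hx1 : D * x.1 = t * (q.1 - p.1) + u * (r.1 - p.1))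
    (hx2 : D * x.2 = t * (q.2 - p.2) + u * (r.2 - p.2))
    (ht0 : 0 ≤ t) (hu0 : 0 ≤ u) (htu : t + u ≤ D) :
    (t = 0 ∧ u = 0) ∨ (t = D ∧ u = 0) ∨ (t = 0 ∧ u = D) := by
  have hDne : D ≠ 0 := hD.ne'
  have hDpos : (0:ℝ) < (D:ℝ) := by exact_mod_cast hD
  have hDR : (D:ℝ) ≠ 0 := hDpos.ne'
  obtain ⟨htf, huf⟩ := SOLVE (q.1 - p.1) (q.2 - p.2) (r.1 - p.1) (r.2 - p.2) D x.1 x.2 t u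
    hDne hdet hx1 hx2
  -- real coordinate identities
  have hx1R : (D:ℝ) * x.1 = t * ((q.1:ℝ) - p.1) + u * ((r.1:ℝ) - p.1) := by exact_mod_cast hx1
  have hx2R : (D:ℝ) * x.2 = t * ((q.2:ℝ) - p.2) + u * ((r.2:ℝ) - p.2) := by exact_mod_cast hx2
  have h0 : ((p.1 : ℝ) + x.1) =
      (1 - (t:ℝ)/D - (u:ℝ)/D) * p.1 + ((t:ℝ)/D) * q.1 + ((u:ℝ)/D) * r.1 := by
    field_simp
    linear_combination hx1R
  have h1 : ((p.2 : ℝ) + x.2) =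
      (1 - (t:ℝ)/D - (u:ℝ)/D) * p.2 + ((t:ℝ)/D) * q.2 + ((u:ℝ)/D) * r.2 := by
    field_simp
    linear_combination hx2R
  have habc : (1 - (t:ℝ)/D - (u:ℝ)/D) + (t:ℝ)/D + (u:ℝ)/D = 1 := by ring
  have ha : 0 ≤ 1 - (t:ℝ)/D - (u:ℝ)/D := by
    have hsum : (t:ℝ)/D + (u:ℝ)/D = ((t:ℝ) + u)/D := by ring
    have h' : ((t:ℝ) + u)/D ≤ 1 := (div_le_one hDpos).mpr (by exact_mod_cast htu)
    linarith
  have hb : 0 ≤ (t:ℝ)/D := div_nonneg (by exact_mod_cast ht0) hDpos.le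
  have hc : 0 ≤ (u:ℝ)/D := div_nonneg (by exact_mod_cast hu0) hDpos.le
  have hy := latticePt_add_smul p x _ _ _ q r habc h0 h1
  have hmem := mem_hull3 ha hb hc habc hy
  rcases hempty (p + x) hmem with h | h | h
  · left
    have e1 : x.1 = 0 := by have := congrArg Prod.fst h; simp [Prod.fst_add] at this; omega
    have e2 : x.2 = 0 := by have := congrArg Prod.snd h; simp [Prod.snd_add] at this; omega
    rw [e1, e2] at htf huf
    constructor <;> omega
  · right; left
    have e1 : x.1 = q.1 - p.1 := by
      have := congrArg Prod.fst h; simp [Prod.fst_add] at this; omega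
    have e2 : x.2 = q.2 - p.2 := by
      have := congrArg Prod.snd h; simp [Prod.snd_add] at this; omega
    rw [e1, e2] at htf huf
    constructor
    · rw [htf]; exact hdet
    · rw [huf]; ring
  · right; right
    have e1 : x.1 = r.1 - p.1 := by
      have := congrArg Prod.fst h; simp [Prod.fst_add] at this; omega
    have e2 : x.2 = r.2 - p.2 := by
      have := congrArg Prod.snd h; simp [Prod.snd_add] at this; omega
    rw [e1, e2] at htf huf
    constructor
    · rw [htf]; ring
    · rw [huf]; linear_combination hdet

lemma CORE (p q r : ℤ × ℤ) (D : ℤ) (hD : 0 < D)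
    (hdet : (q.1 - p.1) * (r.2 - p.2) - (q.2 - p.2) * (r.1 - p.1) = D)
    (hempty : ∀ x : ℤ × ℤ,
      latticePt x ∈ convexHull ℝ ({latticePt p, latticePt q, latticePt r} :
        Set (EuclideanSpace ℝ (Fin 2))) → x = p ∨ x = q ∨ x = r)
    (x : ℤ × ℤ) (t u : ℤ)
    (hx1 : D * x.1 = t * (q.1 - p.1) + u * (r.1 - p.1))
    (hx2 : D * x.2 = t * (q.2 - p.2) + u * (r.2 - p.2))
    (ht0 : 0 ≤ t) (ht1 : t < D) (hu0 : 0 ≤ u) (hu1 : u < D)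
    (htu : ¬ (t = 0 ∧ u = 0)) : False := by
  by_cases htu2 : t + u ≤ D
  · rcases CORE0 p q r D hD hdet hempty x t u hx1 hx2 ht0 hu0 htu2 with h | h | h <;> omega
  · set x' : ℤ × ℤ := (q.1 - p.1 + (r.1 - p.1) - x.1, q.2 - p.2 + (r.2 - p.2) - x.2) with hx'
    have hx1' : D * x'.1 = (D - t) * (q.1 - p.1) + (D - u) * (r.1 - p.1) := by
      simp only [hx']; linear_combination (-1 : ℤ) * hx1
    have hx2' : D * x'.2 = (D - t) * (q.2 - p.2) + (D - u) * (r.2 - p.2) := by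
      simp only [hx']; linear_combination (-1 : ℤ) * hx2
    rcases CORE0 p q r D hD hdet hempty x' (D - t) (D - u) hx1' hx2'
      (by omega) (by omega) (by omega) with h | h | h <;> omega

lemma TRY (p q r : ℤ × ℤ) (D : ℤ) (hD : 0 < D)
    (hdet : (q.1 - p.1) * (r.2 - p.2) - (q.2 - p.2) * (r.1 - p.1) = D)
    (hempty : ∀ x : ℤ × ℤ,
      latticePt x ∈ convexHull ℝ ({latticePt p, latticePt q, latticePt r} :
        Set (EuclideanSpace ℝ (Fin 2))) → x = p ∨ x = q ∨ x = r)
    (α β v1 v2 : ℤ)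
    (hv1 : α * (q.1 - p.1) + β * (r.1 - p.1) = D * v1)
    (hv2 : α * (q.2 - p.2) + β * (r.2 - p.2) = D * v2) :
    D ∣ α ∧ D ∣ β := by
  have hDne : D ≠ 0 := hD.ne'
  by_contra hc
  have hdiv1 : D * (α / D) + α % D = α := Int.mul_ediv_add_emod α D
  have hdiv2 : D * (β / D) + β % D = β := Int.mul_ediv_add_emod β D
  set x : ℤ × ℤ := (v1 - (α / D) * (q.1 - p.1) - (β / D) * (r.1 - p.1),
                    v2 - (α / D) * (q.2 - p.2) - (β / D) * (r.2 - p.2)) with hxdef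
  have hx1 : D * x.1 = (α % D) * (q.1 - p.1) + (β % D) * (r.1 - p.1) := by
    simp only [hxdef]
    linear_combination -hv1 - (q.1 - p.1) * hdiv1 - (r.1 - p.1) * hdiv2
  have hx2 : D * x.2 = (α % D) * (q.2 - p.2) + (β % D) * (r.2 - p.2) := by
    simp only [hxdef]
    linear_combination -hv2 - (q.2 - p.2) * hdiv1 - (r.2 - p.2) * hdiv2
  have htu : ¬ (α % D = 0 ∧ β % D = 0) := by
    intro ⟨h1, h2⟩
    exact hc ⟨Int.dvd_of_emod_eq_zero h1, Int.dvd_of_emod_eq_zero h2⟩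
  exact CORE p q r D hD hdet hempty x (α % D) (β % D) hx1 hx2
    (Int.emod_nonneg α hDne) (Int.emod_lt_of_pos α hD)
    (Int.emod_nonneg β hDne) (Int.emod_lt_of_pos β hD) htu

lemma det_pos_one (p q r : ℤ × ℤ) (D : ℤ) (hD : 0 < D)
    (hdet : (q.1 - p.1) * (r.2 - p.2) - (q.2 - p.2) * (r.1 - p.1) = D)
    (hempty : ∀ x : ℤ × ℤ,
      latticePt x ∈ convexHull ℝ ({latticePt p, latticePt q, latticePt r} :
        Set (EuclideanSpace ℝ (Fin 2))) → x = p ∨ x = q ∨ x = r) :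
    D = 1 := by
  by_contra hne
  have hD2 : 2 ≤ D := by omega
  obtain ⟨hd2, hc2⟩ := TRY p q r D hD hdet hempty (r.2 - p.2) (-(q.2 - p.2)) 1 0
    (by linear_combination hdet) (by ring)
  obtain ⟨hd1, hc1⟩ := TRY p q r D hD hdet hempty (-(r.1 - p.1)) (q.1 - p.1) 0 1
    (by ring) (by linear_combination hdet)
  rw [dvd_neg] at hc2 hd1
  obtain ⟨k1, hk1⟩ := hc1  -- q.1 - p.1 = D * k1
  obtain ⟨k2, hk2⟩ := hc2  -- q.2 - p.2 = D * k2
  obtain ⟨k3, hk3⟩ := hd1  -- r.1 - p.1 = D * k3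
  obtain ⟨k4, hk4⟩ := hd2  -- r.2 - p.2 = D * k4
  have key : D * 1 = D * (D * (k1 * k4 - k2 * k3)) := by
    linear_combination (-1 : ℤ) * hdet + (r.2 - p.2) * hk1 + (D * k1) * hk4
      - (r.1 - p.1) * hk2 - (D * k2) * hk3
  have h1 : (1 : ℤ) = D * (k1 * k4 - k2 * k3) := mul_left_cancel₀ hD.ne' key
  have : D ≤ 1 := Int.le_of_dvd one_pos ⟨_, h1⟩
  omega

lemma det_pm_one (p q r : ℤ × ℤ)
    (hnd : (q.1 - p.1) * (r.2 - p.2) - (q.2 - p.2) * (r.1 - p.1) ≠ 0)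
    (hempty : ∀ x : ℤ × ℤ,
      latticePt x ∈ convexHull ℝ ({latticePt p, latticePt q, latticePt r} :
        Set (EuclideanSpace ℝ (Fin 2))) → x = p ∨ x = q ∨ x = r) :
    (q.1 - p.1) * (r.2 - p.2) - (q.2 - p.2) * (r.1 - p.1) = 1 ∨
    (q.1 - p.1) * (r.2 - p.2) - (q.2 - p.2) * (r.1 - p.1) = -1 := by
  rcases lt_or_gt_of_ne hnd with h | h
  · right
    have hswap : ({latticePt p, latticePt r, latticePt q} : Set (EuclideanSpace ℝ (Fin 2))) =
        {latticePt p, latticePt q, latticePt r} := by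
      rw [Set.pair_comm (latticePt r) (latticePt q)]
    have hempty' : ∀ x : ℤ × ℤ,
        latticePt x ∈ convexHull ℝ ({latticePt p, latticePt r, latticePt q} :
          Set (EuclideanSpace ℝ (Fin 2))) → x = p ∨ x = r ∨ x = q := by
      intro x hx
      rcases hempty x (by rwa [hswap] at hx) with h | h | h <;> tauto
    have := det_pos_one p r q (-((q.1 - p.1) * (r.2 - p.2) - (q.2 - p.2) * (r.1 - p.1)))
      (by omega) (by ring) hempty'
    omega
  · left
    exact det_pos_one p q r _ h rfl hempty


/-- Flipping an edge changes its `ℓ₁` length by exactly `2ψ`: let the two empty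
lattice triangles containing the flippable edge `e = pr` form the parallelogram
`p q r s` (so `p + r = q + s`), let `f = qs` be the other diagonal, and let `ψ`
be the `ℓ₁` length of the shortest side of the parallelogram.  If `e` is not a
unit diagonal then `| |f|₁ − |e|₁ | = 2ψ`; more precisely, if `e` is the longer
diagonal then `|e|₁ = |f|₁ + 2ψ`, and if `e` is the shorter diagonal then
`|f|₁ = |e|₁ + 2ψ`. -/
theorem flip_length_change (p q r s : ℤ × ℤ)
    (hpar : p + r = q + s)
    (hnd1 : (q.1 - p.1) * (r.2 - p.2) - (q.2 - p.2) * (r.1 - p.1) ≠ 0)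
    (hempty1 : ∀ x : ℤ × ℤ,
      latticePt x ∈ convexHull ℝ ({latticePt p, latticePt q, latticePt r} :
        Set (EuclideanSpace ℝ (Fin 2))) → x = p ∨ x = q ∨ x = r)
    (hempty2 : ∀ x : ℤ × ℤ,
      latticePt x ∈ convexHull ℝ ({latticePt p, latticePt s, latticePt r} :
        Set (EuclideanSpace ℝ (Fin 2))) → x = p ∨ x = s ∨ x = r)
    (hnotunit : ¬ (|(r - p).1| = 1 ∧ |(r - p).2| = 1)) :
    |l1 (s - q) - l1 (r - p)| = 2 * min (l1 (q - p)) (l1 (r - q)) ∧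
    (l1 (s - q) ≤ l1 (r - p) →
      l1 (r - p) = l1 (s - q) + 2 * min (l1 (q - p)) (l1 (r - q))) ∧
    (l1 (r - p) ≤ l1 (s - q) →
      l1 (s - q) = l1 (r - p) + 2 * min (l1 (q - p)) (l1 (r - q))) := by
  set a1 : ℤ := q.1 - p.1 with ha1
  set a2 : ℤ := q.2 - p.2 with ha2
  set b1 : ℤ := r.1 - q.1 with hb1
  set b2 : ℤ := r.2 - q.2 with hb2
  have hD := det_pm_one p q r hnd1 hempty1
  have hdet' : a1 * b2 - a2 * b1 = 1 ∨ a1 * b2 - a2 * b1 = -1 := by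
    rcases hD with h | h
    · exact Or.inl (by linear_combination h)
    · exact Or.inr (by linear_combination h)
  have hrp1 : (r - p).1 = a1 + b1 := by simp only [Prod.fst_sub]; omega
  have hrp2 : (r - p).2 = a2 + b2 := by simp only [Prod.snd_sub]; omega
  have hnu : ¬ (|a1 + b1| = 1 ∧ |a2 + b2| = 1) := by
    rw [← hrp1, ← hrp2]; exact hnotunit
  have key := key_arith a1 a2 b1 b2 hdet' hnu
  have hs1 : (s - q).1 = b1 - a1 := by
    have := congrArg Prod.fst hpar
    simp only [Prod.fst_add] at this
    simp only [Prod.fst_sub]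
    omega
  have hs2 : (s - q).2 = b2 - a2 := by
    have := congrArg Prod.snd hpar
    simp only [Prod.snd_add] at this
    simp only [Prod.snd_sub]
    omega
  have hL1 : l1 (s - q) = |b1 - a1| + |b2 - a2| := by rw [l1, hs1, hs2]
  have hL2 : l1 (r - p) = |a1 + b1| + |a2 + b2| := by rw [l1, hrp1, hrp2]
  have hL3 : l1 (q - p) = |a1| + |a2| := by simp [l1, ha1, ha2]
  have hL4 : l1 (r - q) = |b1| + |b2| := by simp [l1, hb1, hb2]
  rw [hL1, hL2, hL3, hL4]
  refine ⟨key, ?_, ?_⟩ <;> intro hle <;>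
    rcases abs_cases ((|b1 - a1| + |b2 - a2|) - (|a1 + b1| + |a2 + b2|)) with ⟨h1, h2⟩ | ⟨h1, h2⟩ <;>
    omega
end

section
/- Let (X_t)_{t≥0} be a nonnegative stochastic process adapted to a filtration, let ε ∈ (0,1) and N ≥ 1, and suppose X_t ≥ 1 for all t. Let T be a stopping time such that for all t < T, E[X_{t+1} | F_t] ≤ (1 − ε/N)·X_t. Then E[(1 + ε/N)^T] ≤ X_0. In particular, if X_0 < ∞ then T < ∞ almost surely. -/
open MeasureTheory

/-- Lyapunov supermartingale bound: if `(X_t)` is an adapted process with `X_t ≥ 1`,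
`ε ∈ (0,1)`, `N ≥ 1`, and `T` is a stopping time such that on `{t < T}` one has
`E[X_{t+1} | F_t] ≤ (1 − ε/N)·X_t`, then `E[(1 + ε/N)^T] ≤ E[X_0]`. -/
theorem exponential_moment_of_hitting_time
    {Ω : Type*} {m0 : MeasurableSpace Ω} {μ : Measure Ω} [IsProbabilityMeasure μ]
    (ℱ : Filtration ℕ m0) (X : ℕ → Ω → ℝ)
    (ε N : ℝ) (hε0 : 0 < ε) (hε1 : ε < 1) (hN : 1 ≤ N)
    (hadapted : Adapted ℱ X)
    (hint : ∀ t, Integrable (X t) μ)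
    (hone : ∀ t, ∀ᵐ ω ∂μ, 1 ≤ X t ω)
    (T : Ω → ℕ) (hT : IsStoppingTime ℱ (fun ω => (T ω : WithTop ℕ)))
    (hcontr : ∀ t, ∀ᵐ ω ∂μ, t < T ω →
      (μ[X (t + 1) | ℱ t]) ω ≤ (1 - ε / N) * X t ω) :
    ∫ ω, (1 + ε / N) ^ T ω ∂μ ≤ ∫ ω, X 0 ω ∂μ := by
  set a : ℝ := 1 + ε / N with ha_def
  set r : ℝ := 1 - ε / N with hr_def
  have hN0 : (0:ℝ) < N := lt_of_lt_of_le one_pos hN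
  have hεN0 : 0 < ε / N := div_pos hε0 hN0
  have hεN1 : ε / N < 1 := by
    rw [div_lt_one hN0]; exact lt_of_lt_of_le hε1 hN
  have ha1 : 1 ≤ a := by simp [ha_def]; positivity
  have ha0 : 0 < a := lt_of_lt_of_le one_pos ha1
  have hr0 : 0 < r := by simp [hr_def]; linarith
  have har : a * r ≤ 1 := by
    have h1 : a * r = 1 - (ε/N)^2 := by rw [ha_def, hr_def]; ring
    rw [h1]
    exact sub_le_self _ (sq_nonneg _)
  -- measurability of T
  have hTm : Measurable T := by
    apply measurable_to_countable'
    intro n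
    exact ℱ.le n _ (by simpa [Set.preimage, WithTop.coe_eq_coe] using hT.measurableSet_eq n)
  -- the stopped Lyapunov process
  set Z : ℕ → Ω → ℝ := fun n ω => a ^ (min (T ω) n) * X (min (T ω) n) ω with hZ_def
  have hZint : ∀ n, Integrable (Z n) μ := by
    intro n
    have := integrable_stoppedValue (ι := ℕ) (hT.min_const n)
      (u := fun k ω => a ^ k * X k ω)
      (fun k => (hint k).const_mul _) (N := n) (fun ω => min_le_right _ _)
    exact this
  -- one-step inequality
  have hstep : ∀ n, ∫ ω, Z (n+1) ω ∂μ ≤ ∫ ω, Z n ω ∂μ := by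
    intro n
    have hA : MeasurableSet[ℱ n] {ω | n < T ω} := by
      have := (hT.measurableSet_le n).compl
      simpa [Set.compl_setOf, not_le] using this
    have hA0 : MeasurableSet {ω | n < T ω} := ℱ.le n _ hA
    have hsplit : ∀ (W : Ω → ℝ), Integrable W μ →
        ∫ ω, W ω ∂μ = ∫ ω in {ω | n < T ω}, W ω ∂μ + ∫ ω in {ω | n < T ω}ᶜ, W ω ∂μ :=
      fun W hW => (integral_add_compl hA0 hW).symm
    rw [hsplit _ (hZint (n+1)), hsplit _ (hZint n)]
    have hcompl : ∫ ω in {ω | n < T ω}ᶜ, Z (n+1) ω ∂μ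
        = ∫ ω in {ω | n < T ω}ᶜ, Z n ω ∂μ := by
      apply setIntegral_congr_fun hA0.compl
      intro ω hω
      simp only [Set.mem_compl_iff, Set.mem_setOf_eq, not_lt] at hω
      have h1 : min (T ω) (n+1) = T ω := min_eq_left (le_trans hω (Nat.le_succ n))
      have h2 : min (T ω) n = T ω := min_eq_left hω
      simp [hZ_def, h1, h2]
    rw [hcompl]
    have hXA : (0:ℝ) ≤ ∫ ω in {ω | n < T ω}, X n ω ∂μ := by
      apply setIntegral_nonneg_ae hA0
      filter_upwards [hone n] with ω h1 _
      linarith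
    have hmain : ∫ ω in {ω | n < T ω}, Z (n+1) ω ∂μ
        ≤ ∫ ω in {ω | n < T ω}, Z n ω ∂μ := by
      have hZn1 : ∫ ω in {ω | n < T ω}, Z (n+1) ω ∂μ
          = a ^ (n+1) * ∫ ω in {ω | n < T ω}, X (n+1) ω ∂μ := by
        rw [← integral_const_mul]
        apply setIntegral_congr_fun hA0
        intro ω hω
        have : min (T ω) (n+1) = n+1 := min_eq_right (Nat.succ_le_of_lt hω)
        simp [hZ_def, this]
      have hZn : ∫ ω in {ω | n < T ω}, Z n ω ∂μ
          = a ^ n * ∫ ω in {ω | n < T ω}, X n ω ∂μ := by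
        rw [← integral_const_mul]
        apply setIntegral_congr_fun hA0
        intro ω hω
        have : min (T ω) n = n := min_eq_right (le_of_lt hω)
        simp [hZ_def, this]
      rw [hZn1, hZn]
      have hce : ∫ ω in {ω | n < T ω}, X (n+1) ω ∂μ
          = ∫ ω in {ω | n < T ω}, (μ[X (n+1) | ℱ n]) ω ∂μ :=
        (setIntegral_condExp (ℱ.le n) (hint (n+1)) hA).symm
      have hbound : ∫ ω in {ω | n < T ω}, (μ[X (n+1) | ℱ n]) ω ∂μ
          ≤ ∫ ω in {ω | n < T ω}, r * X n ω ∂μ := by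
        apply setIntegral_mono_ae_restrict integrable_condExp.restrict
          ((hint n).const_mul r).restrict
        refine (ae_restrict_iff' hA0).2 ?_
        filter_upwards [hcontr n] with ω h hω
        exact h hω
      have hXr : ∫ ω in {ω | n < T ω}, r * X n ω ∂μ
          = r * ∫ ω in {ω | n < T ω}, X n ω ∂μ := integral_const_mul r _
      calc a ^ (n+1) * ∫ ω in {ω | n < T ω}, X (n+1) ω ∂μ
          ≤ a ^ (n+1) * (r * ∫ ω in {ω | n < T ω}, X n ω ∂μ) := by
            rw [hce]
            apply mul_le_mul_of_nonneg_left _ (by positivity)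
            rw [← hXr]; exact hbound
        _ ≤ a ^ n * ∫ ω in {ω | n < T ω}, X n ω ∂μ := by
            have han : (0:ℝ) ≤ a ^ n := by positivity
            have hps : a ^ (n+1) = a ^ n * a := pow_succ a n
            have h2 := mul_le_mul_of_nonneg_right har
              (mul_nonneg han hXA)
            calc a ^ (n+1) * (r * ∫ ω in {ω | n < T ω}, X n ω ∂μ)
                = a * r * (a ^ n * ∫ ω in {ω | n < T ω}, X n ω ∂μ) := by rw [hps]; ring
              _ ≤ 1 * (a ^ n * ∫ ω in {ω | n < T ω}, X n ω ∂μ) := h2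
              _ = a ^ n * ∫ ω in {ω | n < T ω}, X n ω ∂μ := one_mul _
    linarith
  have hZ0 : ∫ ω, Z 0 ω ∂μ = ∫ ω, X 0 ω ∂μ := by
    apply integral_congr_ae
    filter_upwards with ω
    simp [hZ_def]
  have hZle : ∀ n, ∫ ω, Z n ω ∂μ ≤ ∫ ω, X 0 ω ∂μ := by
    intro n
    induction n with
    | zero => exact le_of_eq hZ0
    | succ k ih => exact (hstep k).trans ih
  -- the truncated exponential
  set f : ℕ → Ω → ℝ := fun n ω => a ^ (min (T ω) n) with hf_def
  have hfm : ∀ n, Measurable (f n) := by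
    intro n
    exact (measurable_from_top (f := fun k : ℕ => a ^ k)).comp (hTm.min measurable_const)
  have hfnonneg : ∀ n ω, 0 ≤ f n ω := fun n ω => by positivity
  have hfint : ∀ n, Integrable (f n) μ := by
    intro n
    apply Integrable.mono' (integrable_const (a ^ n)) (hfm n).aestronglyMeasurable
    filter_upwards with ω
    rw [Real.norm_eq_abs, abs_of_nonneg (hfnonneg n ω)]
    exact pow_le_pow_right₀ ha1 (min_le_right _ _)
  have hfZ : ∀ n, ∫ ω, f n ω ∂μ ≤ ∫ ω, Z n ω ∂μ := by
    intro n
    apply integral_mono_ae (hfint n) (hZint n)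
    have hall : ∀ᵐ ω ∂μ, ∀ k, 1 ≤ X k ω := ae_all_iff.2 hone
    filter_upwards [hall] with ω h
    have := h (min (T ω) n)
    simp only [hf_def, hZ_def]
    nlinarith [pow_pos ha0 (min (T ω) n)]
  have hfle : ∀ n, ∫ ω, f n ω ∂μ ≤ ∫ ω, X 0 ω ∂μ := fun n => (hfZ n).trans (hZle n)
  -- pass to the limit via lintegral
  have hsup : ∀ ω, (⨆ n, ENNReal.ofReal (f n ω)) = ENNReal.ofReal (a ^ T ω) := by
    intro ω
    apply le_antisymm
    · apply iSup_le
      intro n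
      exact ENNReal.ofReal_le_ofReal (pow_le_pow_right₀ ha1 (min_le_left _ _))
    · refine le_iSup_of_le (T ω) ?_
      simp [hf_def]
  have hlint : ∫⁻ ω, ENNReal.ofReal (a ^ T ω) ∂μ ≤ ENNReal.ofReal (∫ ω, X 0 ω ∂μ) := by
    have hmono : Monotone fun n => fun ω => ENNReal.ofReal (f n ω) := by
      intro m n hmn ω
      exact ENNReal.ofReal_le_ofReal (pow_le_pow_right₀ ha1 (min_le_min le_rfl hmn))
    have : ∫⁻ ω, ENNReal.ofReal (a ^ T ω) ∂μ
        = ⨆ n, ∫⁻ ω, ENNReal.ofReal (f n ω) ∂μ := by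
      rw [← lintegral_iSup (fun n => (hfm n).ennreal_ofReal) hmono]
      congr 1
      ext ω
      exact (hsup ω).symm
    rw [this]
    apply iSup_le
    intro n
    rw [← ofReal_integral_eq_lintegral_ofReal (hfint n) (Filter.Eventually.of_forall (hfnonneg n))]
    exact ENNReal.ofReal_le_ofReal (hfle n)
  have hTmexp : AEStronglyMeasurable (fun ω => a ^ T ω) μ :=
    ((measurable_from_top (f := fun k : ℕ => a ^ k)).comp hTm).aestronglyMeasurable
  rw [integral_eq_lintegral_of_nonneg_ae (Filter.Eventually.of_forall fun ω => by positivity)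
    hTmexp]
  calc (∫⁻ ω, ENNReal.ofReal (a ^ T ω) ∂μ).toReal
      ≤ (ENNReal.ofReal (∫ ω, X 0 ω ∂μ)).toReal := ENNReal.toReal_mono ENNReal.ofReal_ne_top hlint
    _ = ∫ ω, X 0 ω ∂μ := ENNReal.toReal_ofReal
        (integral_nonneg_of_ae ((hone 0).mono fun ω h => by simpa using le_trans zero_le_one h))
end
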